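/- arXiv:0903.4994 — 4 statements merged into one kernel-verified Lean document; each statement's English description precedes it below -/
import Mathlib

section
/- Every nonzero Z₂-graded associative algebra structure on a 1|1-dimensional complex vector space is equivalent (under an even linear automorphism) to exactly one of six structures: d₁ = −ψ_f^{ff}+ψ_e^{ef}−ψ_e^{fe}+ψ_f^{ee}, d₂ = ψ_f^{ff}, d₃ = −ψ_f^{ff}+ψ_e^{ef}, d₄ = ψ_f^{ff}+ψ_e^{fe}, d₅ = −ψ_f^{ff}+ψ_e^{ef}−ψ_e^{fe}, d₆ = ψ_f^{ee}. -/
/-! Framework: the `1|1`-dimensional complex graded vector space `W = ⟨e,f⟩`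
(`false` denotes the even basis element `e`, `true` the odd basis element `f`),
Hochschild cochains in coefficient form, and the Hochschild coboundary
`D(φ) = [d,φ]` given by the graded commutator of coderivations on `T(W)`. -/

/-- A degree-`n` multi-index of basis elements of `W`. -/
abbrev Idx (n : ℕ) := Fin n → Bool

/-- A degree-`n` Hochschild cochain `Cⁿ(W) = Hom(W^⊗n, W)`, recorded by its
coefficients: `φ J i` is the coefficient of `w_i` in `φ(w_J)`. -/
abbrev Cochain (n : ℕ) := Idx n → Bool → ℂ

/-- Parity (0 or 1) of a basis element: `e = false` is even, `f = true` is odd. -/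
def pb (b : Bool) : ℕ := if b then 1 else 0

/-- Total parity count of a multi-index. -/
def pc {n : ℕ} (J : Idx n) : ℕ := ∑ i, pb (J i)

/-- Parity count of the length-`t` prefix of a multi-index. -/
def pcP {n : ℕ} (J : Idx n) (t : ℕ) : ℕ :=
  ∑ i ∈ Finset.univ.filter (fun i : Fin n => i.val < t), pb (J i)

/-- The sign `(−1)^m`. -/
noncomputable def msign (m : ℕ) : ℂ := (-1) ^ m

/-- Replace the adjacent pair of entries at positions `k, k+1` of `J` by the single entry `j`. -/
def repl {n : ℕ} (J : Idx (n + 1)) (k : Fin n) (j : Bool) : Idx n :=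
  fun i => if i.val < k.val then J i.castSucc else if i.val = k.val then j else J i.succ

/-- The coderivation `ψ_i^{ab} ∈ Hom(W⊗W, W)` sending `w_a ⊗ w_b` to `w_i`,
in coefficient form: `delta2 a b i x y j` is the coefficient of `w_j` in `ψ_i^{ab}(w_x ⊗ w_y)`. -/
noncomputable def delta2 (a b i : Bool) : Bool → Bool → Bool → ℂ :=
  fun x y j => if x = a ∧ y = b ∧ j = i then 1 else 0

/-- The Hochschild coboundary `D(φ) = [d, φ] = d∘φ − (−1)^{|φ|} φ∘d` of a cochain
`φ ∈ Cⁿ(W)` with respect to an odd quadratic codifferential `d`, with the usual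
Koszul signs for insertions of coderivations. -/
noncomputable def Dmap (d : Bool → Bool → Bool → ℂ) {n : ℕ} (φ : Cochain n) :
    Cochain (n + 1) := fun J i =>
  (∑ j : Bool, φ (fun k => J k.castSucc) j * d j (J (Fin.last n)) i)
    + (∑ j : Bool, msign ((pc (fun k : Fin n => J k.succ) + pb j) * pb (J 0)) *
        (φ (fun k => J k.succ) j * d (J 0) j i))
    - ∑ k : Fin n, ∑ j : Bool,
        msign (pc (repl J k j) + pb i + pcP J k.val) *
          (φ (repl J k j) i * d (J k.castSucc) (J k.succ) j)

/-- The Hochschild coboundary as a linear map `Cⁿ(W) →ₗ Cⁿ⁺¹(W)`. -/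
noncomputable def Dlin (d : Bool → Bool → Bool → ℂ) (n : ℕ) :
    Cochain n →ₗ[ℂ] Cochain (n + 1) where
  toFun := Dmap d
  map_add' φ ψ := by
    funext J i
    simp only [Dmap, Pi.add_apply, mul_add, add_mul, Finset.sum_add_distrib]
    ring
  map_smul' c φ := by
    funext J i
    simp only [Dmap, Pi.smul_apply, smul_eq_mul, RingHom.id_apply, mul_add, mul_sub,
      Finset.mul_sum, mul_assoc, mul_left_comm]

/-- Hochschild cocycles: `ker (D : Cⁿ → Cⁿ⁺¹)`. -/
noncomputable def Zsp (d : Bool → Bool → Bool → ℂ) (n : ℕ) : Submodule ℂ (Cochain n) :=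
  LinearMap.ker (Dlin d n)

/-- Hochschild coboundaries: `im (D : Cⁿ⁻¹ → Cⁿ)` (there are none in degree `0`). -/
noncomputable def Bsp (d : Bool → Bool → Bool → ℂ) : (n : ℕ) → Submodule ℂ (Cochain n)
  | 0 => ⊥
  | (n + 1) => LinearMap.range (Dlin d n)

/-- The Hochschild cohomology `Hⁿ(d) = ker D / im D`. -/
abbrev Hsp (d : Bool → Bool → Bool → ℂ) (n : ℕ) :=
  (Zsp d n) ⧸ (Submodule.comap (Zsp d n).subtype (Bsp d n))

/-- The basis cochain `φ^I_i`, sending `w_I` to `w_i` and other basis tensors to `0`. -/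
noncomputable def bC {n : ℕ} (I : Idx n) (i : Bool) : Cochain n :=
  fun J j => if J = I ∧ j = i then 1 else 0

/-- `φ_e^{eⁿ}`: the cochain sending `e^⊗n` to `e` and all other basis tensors to `0`. -/
noncomputable def phiE (n : ℕ) : Cochain n := bC (fun _ => false) false

/-- `φ_f^{eⁿ}`: the cochain sending `e^⊗n` to `f` and all other basis tensors to `0`. -/
noncomputable def phiF (n : ℕ) : Cochain n := bC (fun _ => false) true

/-- `d₁ = ψ_e^{ef} − ψ_e^{fe} + ψ_f^{ee} − ψ_f^{ff}`. -/
noncomputable def dd1 : Bool → Bool → Bool → ℂ :=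
  fun a b i => delta2 false true false a b i - delta2 true false false a b i
    + delta2 false false true a b i - delta2 true true true a b i

/-- `d₂ = ψ_f^{ff}`. -/
noncomputable def dd2 : Bool → Bool → Bool → ℂ := delta2 true true true

/-- `d₃ = ψ_e^{ef} − ψ_f^{ff}`. -/
noncomputable def dd3 : Bool → Bool → Bool → ℂ :=
  fun a b i => delta2 false true false a b i - delta2 true true true a b i

/-- `d₄ = ψ_e^{fe} + ψ_f^{ff}`. -/
noncomputable def dd4 : Bool → Bool → Bool → ℂ :=
  fun a b i => delta2 true false false a b i + delta2 true true true a b i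

/-- `d₅ = ψ_e^{ef} − ψ_e^{fe} − ψ_f^{ff}`. -/
noncomputable def dd5 : Bool → Bool → Bool → ℂ :=
  fun a b i => delta2 false true false a b i - delta2 true false false a b i
    - delta2 true true true a b i

/-- `d₆ = ψ_f^{ee}`. -/
noncomputable def dd6 : Bool → Bool → Bool → ℂ := delta2 false false true

/-- A quadratic structure `d` on `W`, viewed as a cochain in `C²(W)`. -/
noncomputable def toC2 (d : Bool → Bool → Bool → ℂ) : Cochain 2 := fun J i => d (J 0) (J 1) i

/-- `d` is an odd (i.e. even as an algebra multiplication on `V = ΠW`) quadratic structure: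
all its components `ψ_i^{ab}` with `|a| + |b| + |i|` even vanish. -/
def IsOddStruct (d : Bool → Bool → Bool → ℂ) : Prop :=
  ∀ a b i : Bool, (pb a + pb b + pb i) % 2 = 0 → d a b i = 0

/-- The diagonal scaling determined by an even linear automorphism `g` of `W = ⟨e,f⟩`:
`g(e) = gE·e`, `g(f) = gO·f` (an even automorphism of a `1|1`-dimensional space
preserves each one-dimensional graded piece, hence is of this form). -/
noncomputable def gsc (gE gO : ℂ) : Bool → ℂ := fun b => if b then gO else gE

/-- `d` and `d'` are equivalent under an even linear automorphism `g` of `W`: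
`d' = g⁻¹ ∘ d ∘ (g ⊗ g)`, written without inverses as `g ∘ d' = d ∘ (g ⊗ g)`. -/
noncomputable def EquivCod (d d' : Bool → Bool → Bool → ℂ) : Prop :=
  ∃ gE gO : ℂ, gE ≠ 0 ∧ gO ≠ 0 ∧
    ∀ a b i : Bool, d' a b i * gsc gE gO i = d a b i * (gsc gE gO a * gsc gE gO b)

/-- The list of the six codifferentials `d₁, …, d₆`. -/
noncomputable def dlist : Fin 6 → (Bool → Bool → Bool → ℂ) := ![dd1, dd2, dd3, dd4, dd5, dd6]

private lemma zero_iff_of_mul_eq {x y u v : ℂ} (hu : u ≠ 0) (hv : v ≠ 0)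
    (hxy : x * u = y * v) : (x = 0 ↔ y = 0) := by
  constructor
  · intro hz
    have : y * v = 0 := by rw [← hxy, hz, zero_mul]
    exact (mul_eq_zero.1 this).resolve_right hv
  · intro hz
    have : x * u = 0 := by rw [hxy, hz, zero_mul]
    exact (mul_eq_zero.1 this).resolve_right hu

private lemma equiv_pattern {d d' : Bool → Bool → Bool → ℂ} (h : EquivCod d d') :
    (d' false false true = 0 ↔ d false false true = 0) ∧
    (d' false true false = 0 ↔ d false true false = 0) ∧
    (d' true false false = 0 ↔ d true false false = 0) := by
  obtain ⟨gE, gO, hE, hO, hrel⟩ := h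
  have h1 := hrel false false true
  have h2 := hrel false true false
  have h3 := hrel true false false
  simp only [gsc, if_true, if_false, Bool.false_eq_true] at h1 h2 h3
  exact ⟨zero_iff_of_mul_eq hO (mul_ne_zero hE hE) h1,
    zero_iff_of_mul_eq hE (mul_ne_zero hE hO) h2,
    zero_iff_of_mul_eq hE (mul_ne_zero hO hE) h3⟩

/-- Every nonzero `ℤ₂`-graded associative algebra structure (odd quadratic
codifferential, `[d,d] = 0`) on the `1|1`-dimensional complex space `W = ⟨e,f⟩` is
equivalent, under an even linear automorphism, to exactly one of
`d₁ = −ψ_f^{ff}+ψ_e^{ef}−ψ_e^{fe}+ψ_f^{ee}`, `d₂ = ψ_f^{ff}`, `d₃ = −ψ_f^{ff}+ψ_e^{ef}`,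
`d₄ = ψ_f^{ff}+ψ_e^{fe}`, `d₅ = −ψ_f^{ff}+ψ_e^{ef}−ψ_e^{fe}`, `d₆ = ψ_f^{ee}`. -/
theorem moduli_space_six_points (d : Bool → Bool → Bool → ℂ)
    (hodd : IsOddStruct d)
    (hcod : Dmap d (toC2 d) = 0)
    (hne : d ≠ fun _ _ _ => 0) :
    ∃! k : Fin 6, EquivCod d (dlist k) := by
  have z1 : d false false false = 0 := hodd _ _ _ rfl
  have z2 : d false true true = 0 := hodd _ _ _ rfl
  have z3 : d true false true = 0 := hodd _ _ _ rfl
  have z4 : d true true false = 0 := hodd _ _ _ rfl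
  have E1 : d false false true * (d false true false + d true false false) = 0 := by
    have h := congrFun (congrFun hcod ![false,false,false]) false
    simp only [Dmap, toC2, pc, pcP, pb, msign, repl, Finset.sum_filter, Fin.sum_univ_three,
      Fin.sum_univ_two, Fintype.sum_bool, Fin.isValue] at h
    norm_num [Fin.last, Fin.sum_univ_succ, Matrix.cons_val_two, z1, z2, z3, z4] at h
    linear_combination h/2
  have E3 : d false true false * (d false true false + d true true true) = 0 := by
    have h := congrFun (congrFun hcod ![false,true,true]) false
    simp only [Dmap, toC2, pc, pcP, pb, msign, repl, Finset.sum_filter, Fin.sum_univ_three,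
      Fin.sum_univ_two, Fintype.sum_bool, Fin.isValue] at h
    norm_num [Fin.last, Fin.sum_univ_succ, Matrix.cons_val_two, z1, z2, z3, z4] at h
    linear_combination h/2
  have E4 : d false false true * (d true false false - d true true true) = 0 := by
    have h := congrFun (congrFun hcod ![true,false,false]) true
    simp only [Dmap, toC2, pc, pcP, pb, msign, repl, Finset.sum_filter, Fin.sum_univ_three,
      Fin.sum_univ_two, Fintype.sum_bool, Fin.isValue] at h
    norm_num [Fin.last, Fin.sum_univ_succ, Matrix.cons_val_two, z1, z2, z3, z4] at h
    linear_combination h/2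
  have E5 : d true false false * (d true true true - d true false false) = 0 := by
    have h := congrFun (congrFun hcod ![true,true,false]) false
    simp only [Dmap, toC2, pc, pcP, pb, msign, repl, Finset.sum_filter, Fin.sum_univ_three,
      Fin.sum_univ_two, Fintype.sum_bool, Fin.isValue] at h
    norm_num [Fin.last, Fin.sum_univ_succ, Matrix.cons_val_two, z1, z2, z3, z4] at h
    linear_combination h/2
  by_cases h1 : d false false true = 0
  · by_cases h2 : d false true false = 0
    · by_cases h3 : d true false false = 0
      · -- class d₂ = ψ_f^{ff}
        have h4 : d true true true ≠ 0 := by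
          intro h4
          apply hne; funext a b i
          cases a <;> cases b <;> cases i <;> assumption
        refine ⟨1, ?_, ?_⟩
        · show EquivCod d dd2
          refine ⟨(1:ℂ), (d true true true)⁻¹, one_ne_zero, inv_ne_zero h4, ?_⟩
          intro a b i
          cases a <;> cases b <;> cases i <;>
            simp [dd2, delta2, gsc, z1, z2, z3, z4, h1, h2, h3] <;>
            field_simp
        · intro j hj
          obtain ⟨p1, p2, p3⟩ := equiv_pattern hj
          fin_cases j <;>
            first
            | rfl
            | (norm_num [dlist, dd1, dd2, dd3, dd4, dd5, dd6, delta2] at p1 p2 p3; tauto)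
      · -- class d₄ : c2 = 0, c3 ≠ 0, hence c4 = c3
        have e5 : d true true true = d true false false :=
          sub_eq_zero.1 ((mul_eq_zero.1 E5).resolve_left h3)
        refine ⟨3, ?_, ?_⟩
        · show EquivCod d dd4
          refine ⟨(1:ℂ), (d true false false)⁻¹, one_ne_zero, inv_ne_zero h3, ?_⟩
          intro a b i
          cases a <;> cases b <;> cases i <;>
            simp [dd4, delta2, gsc, z1, z2, z3, z4, h1, h2, e5] <;>
            field_simp
        · intro j hj
          obtain ⟨p1, p2, p3⟩ := equiv_pattern hj
          fin_cases j <;>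
            first
            | rfl
            | (norm_num [dlist, dd1, dd2, dd3, dd4, dd5, dd6, delta2] at p1 p2 p3; tauto)
    · -- c2 ≠ 0, hence c4 = -c2
      have e3 : d true true true = -d false true false := by
        have := (mul_eq_zero.1 E3).resolve_left h2
        linear_combination this
      by_cases h3 : d true false false = 0
      · -- class d₃
        refine ⟨2, ?_, ?_⟩
        · show EquivCod d dd3
          refine ⟨(1:ℂ), (d false true false)⁻¹, one_ne_zero, inv_ne_zero h2, ?_⟩
          intro a b i
          cases a <;> cases b <;> cases i <;>
            simp [dd3, delta2, gsc, z1, z2, z3, z4, h1, h3, e3] <;>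
            field_simp
        · intro j hj
          obtain ⟨p1, p2, p3⟩ := equiv_pattern hj
          fin_cases j <;>
            first
            | rfl
            | (norm_num [dlist, dd1, dd2, dd3, dd4, dd5, dd6, delta2] at p1 p2 p3; tauto)
      · -- class d₅ : c3 ≠ 0 too, c4 = c3 = -c2
        have e5 : d true true true = d true false false :=
          sub_eq_zero.1 ((mul_eq_zero.1 E5).resolve_left h3)
        have e35 : d true false false = -d false true false := by
          rw [← e5]; exact e3
        refine ⟨4, ?_, ?_⟩
        · show EquivCod d dd5
          refine ⟨(1:ℂ), (d false true false)⁻¹, one_ne_zero, inv_ne_zero h2, ?_⟩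
          intro a b i
          cases a <;> cases b <;> cases i <;>
            simp [dd5, delta2, gsc, z1, z2, z3, z4, h1, e3, e35] <;>
            field_simp
        · intro j hj
          obtain ⟨p1, p2, p3⟩ := equiv_pattern hj
          fin_cases j <;>
            first
            | rfl
            | (norm_num [dlist, dd1, dd2, dd3, dd4, dd5, dd6, delta2] at p1 p2 p3; tauto)
  · -- c1 ≠ 0 : c3 = c4 and c2 = -c3
    have e4 : d true false false = d true true true :=
      sub_eq_zero.1 ((mul_eq_zero.1 E4).resolve_left h1)
    have e1 : d false true false = -d true false false := by
      have := (mul_eq_zero.1 E1).resolve_left h1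
      linear_combination this
    by_cases h4 : d true true true = 0
    · -- class d₆ : c2 = c3 = c4 = 0
      have e3z : d true false false = 0 := by rw [e4, h4]
      have e2z : d false true false = 0 := by rw [e1, e3z, neg_zero]
      refine ⟨5, ?_, ?_⟩
      · show EquivCod d dd6
        refine ⟨(1:ℂ), d false false true, one_ne_zero, h1, ?_⟩
        intro a b i
        cases a <;> cases b <;> cases i <;>
          simp [dd6, delta2, gsc, z1, z2, z3, z4, h4, e3z, e2z] <;>
          ring
      · intro j hj
        obtain ⟨p1, p2, p3⟩ := equiv_pattern hj
        fin_cases j <;>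
          first
          | rfl
          | (norm_num [dlist, dd1, dd2, dd3, dd4, dd5, dd6, delta2] at p1 p2 p3; tauto)
    · -- class d₁
      have hprod : d false false true * d true true true ≠ 0 := mul_ne_zero h1 h4
      obtain ⟨gE, hgE⟩ :=
        IsAlgClosed.exists_eq_mul_self (-(d false false true * d true true true)⁻¹)
      have hgE0 : gE ≠ 0 := by
        intro hz
        rw [hz, mul_zero] at hgE
        exact (neg_ne_zero.2 (inv_ne_zero hprod)) hgE
      have h3' : d true false false ≠ 0 := by rw [e4]; exact h4
      have h2' : d false true false ≠ 0 := by rw [e1]; exact neg_ne_zero.2 h3'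
      have hgE' : gE * gE * (d false false true * d true true true) = -1 := by
        rw [← hgE]; field_simp
      refine ⟨0, ?_, ?_⟩
      · show EquivCod d dd1
        refine ⟨gE, -(d true true true)⁻¹, hgE0, neg_ne_zero.2 (inv_ne_zero h4), ?_⟩
        intro a b i
        cases a <;> cases b <;> cases i <;>
          simp [dd1, delta2, gsc, z1, z2, z3, z4, e4, e1] <;>
          field_simp <;>
          linear_combination -hgE'
      · intro j hj
        obtain ⟨p1, p2, p3⟩ := equiv_pattern hj
        fin_cases j <;>
          first
          | rfl
          | (norm_num [dlist, dd1, dd2, dd3, dd4, dd5, dd6, delta2] at p1 p2 p3; tauto)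
end

section
/- For the codifferential d₃ = ψ_e^{ef} − ψ_f^{ff} on a 1|1-dimensional space, the Hochschild cohomology vanishes in all degrees: Hⁿ(d₃) = 0 for all n ≥ 0. -/
-- msign lemmas
lemma msign_add (a b : ℕ) : msign (a + b) = msign a * msign b := by
  simp [msign, pow_add]
lemma msign_mul_self (a : ℕ) : msign a * msign a = 1 := by
  rw [← msign_add, msign]
  have : a + a = 2 * a := by ring
  rw [this, pow_mul]; norm_num
lemma msign_zero : msign 0 = 1 := by simp [msign]
lemma msign_one : msign 1 = -1 := by simp [msign]
@[simp] lemma pb_true : pb true = 1 := rfl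
@[simp] lemma pb_false : pb false = 0 := rfl

lemma dd3_apply (a b c : Bool) :
    dd3 a b c = if b = true ∧ c = a then (if a = true then -1 else 1) else 0 := by
  cases a <;> cases b <;> cases c <;> simp [dd3, delta2]

-- index lemmas
lemma cons_last {n : ℕ} (a : Bool) (J : Idx (n+1)) :
    (Fin.cons a J : Idx (n+2)) (Fin.last (n+1)) = J (Fin.last n) := by
  rw [← Fin.succ_last, Fin.cons_succ]
lemma init_cons {n : ℕ} (a : Bool) (J : Idx (n+1)) :
    Fin.init (Fin.cons a J : Idx (n+2)) = Fin.cons a (Fin.init J) := by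
  funext i
  refine Fin.cases ?_ (fun i => ?_) i
  · simp [Fin.init]
  · simp [Fin.init, ← Fin.succ_castSucc]
lemma tail_last {n : ℕ} (J : Idx (n+2)) :
    Fin.tail J (Fin.last n) = J (Fin.last (n+1)) := by
  rw [← Fin.succ_last]; rfl
lemma init_zero {n : ℕ} (J : Idx (n+2)) : Fin.init J 0 = J 0 := by
  simp [Fin.init]
lemma tail_init {n : ℕ} (J : Idx (n+2)) : Fin.tail (Fin.init J) = Fin.init (Fin.tail J) := by
  funext i
  simp [Fin.init, Fin.tail, Fin.succ_castSucc, -Fin.castSucc_succ]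

-- pc lemmas
lemma pc_cons {n : ℕ} (a : Bool) (J : Idx n) : pc (Fin.cons a J : Idx (n+1)) = pb a + pc J := by
  simp [pc, Fin.sum_univ_succ]
lemma pc_tail {n : ℕ} (J : Idx (n+1)) : pc J = pb (J 0) + pc (Fin.tail J) := by
  conv_lhs => rw [← Fin.cons_self_tail J, pc_cons]
lemma pc_init {n : ℕ} (J : Idx (n+1)) : pc J = pc (Fin.init J) + pb (J (Fin.last n)) := by
  simp [pc, Fin.sum_univ_castSucc, Fin.init]

-- pcP lemmas
lemma pcP_eq {n : ℕ} (J : Idx n) (t : ℕ) : pcP J t = ∑ i, if i.val < t then pb (J i) else 0 := by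
  rw [pcP, Finset.sum_filter]
lemma pcP_zero {n : ℕ} (J : Idx n) : pcP J 0 = 0 := by
  simp [pcP_eq]
lemma pcP_cons {n : ℕ} (a : Bool) (J : Idx n) (t : ℕ) :
    pcP (Fin.cons a J : Idx (n+1)) (t+1) = pb a + pcP J t := by
  simp only [pcP_eq, Fin.sum_univ_succ, Fin.cons_zero, Fin.cons_succ]
  congr 1
  · simp

-- repl lemmas
lemma repl_zero {n : ℕ} (J : Idx (n+2)) (j : Bool) :
    repl J 0 j = Fin.cons j (Fin.tail (Fin.tail J)) := by
  funext i
  refine Fin.cases ?_ (fun i => ?_) i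
  · simp [repl]
  · simp [repl, Fin.tail]
lemma repl_cons_succ {n : ℕ} (a : Bool) (J : Idx (n+1)) (k : Fin n) (j : Bool) :
    repl (Fin.cons a J : Idx (n+2)) k.succ j = Fin.cons a (repl J k j) := by
  funext i
  refine Fin.cases ?_ (fun i => ?_) i
  · simp [repl]
  · simp only [repl, Fin.cons_succ, Fin.val_succ]
    rcases lt_trichotomy i.val k.val with h | h | h
    · simp [h, Nat.succ_lt_succ h, ← Fin.succ_castSucc]
    · simp [h, Nat.lt_irrefl]
    · have h1 : ¬ (i.val < k.val) := by omega
      have h2 : ¬ (i.val = k.val) := by omega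
      have h3 : ¬ (i.val + 1 < k.val + 1) := by omega
      have h4 : ¬ (i.val + 1 = k.val + 1) := by omega
      simp [h1, h2, h3, h4]
lemma tail_repl_succ {n : ℕ} (J : Idx (n+2)) (k : Fin n) (j : Bool) :
    Fin.tail (repl J k.succ j) = repl (Fin.tail J) k j := by
  conv_lhs => rw [← Fin.cons_self_tail J, repl_cons_succ, Fin.tail_cons]
lemma repl_zero_head {n : ℕ} (J : Idx (n+2)) (k : Fin (n+1)) :
    repl J k (J k.castSucc) 0 = J 0 := by
  refine Fin.cases ?_ (fun k' => ?_) k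
  · simp [repl]
  · simp [repl]
lemma pc_repl {n : ℕ} (J : Idx (n+1)) (k : Fin n) (j : Bool) :
    pc (repl J k j) + pb (J k.castSucc) + pb (J k.succ) = pc J + pb j := by
  induction n with
  | zero => exact k.elim0
  | succ n ih =>
    refine Fin.cases ?_ (fun k' => ?_) k
    · rw [repl_zero, pc_cons]
      rw [pc_tail J, pc_tail (Fin.tail J)]
      show pb j + pc (Fin.tail (Fin.tail J)) + pb (J 0) + pb (Fin.tail J 0) = _
      simp [Fin.tail]; ring
    · conv_lhs => rw [← Fin.cons_self_tail J, repl_cons_succ, pc_cons]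
      have := ih (Fin.tail J) k'
      rw [pc_tail J]
      show pb (J 0) + pc (repl (Fin.tail J) k' j) + pb (J k'.castSucc.succ) + pb (J k'.succ.succ) = _
      have e1 : J k'.castSucc.succ = Fin.tail J k'.castSucc := rfl
      have e2 : J k'.succ.succ = Fin.tail J k'.succ := rfl
      rw [e1, e2]; omega

lemma Dexpand (m : ℕ) (ψ : Cochain m) (J : Idx (m+1)) (i : Bool) :
    Dmap dd3 ψ J i =
      (if J (Fin.last m) = true then msign (pb i) * ψ (Fin.init J) i else 0)
    + (if J 0 = i then msign (pc (Fin.tail J) * pb i) * ψ (Fin.tail J) true else 0)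
    - ∑ k : Fin m, (if J k.succ = true then
        msign (pc (repl J k (J k.castSucc)) + pb i + pcP J k.val + pb (J k.castSucc)) *
          ψ (repl J k (J k.castSucc)) i else 0) := by
  have e1 : (fun k : Fin m => J k.castSucc) = Fin.init J := rfl
  have e2 : (fun k : Fin m => J k.succ) = Fin.tail J := rfl
  rw [Dmap, e1, e2]
  congr 1
  congr 1
  · rw [Fintype.sum_bool]
    rcases hl : J (Fin.last m) <;> rcases i <;>
      simp [dd3_apply, msign_one, msign_zero] <;> ring
  · rw [Fintype.sum_bool]
    rcases h0 : J 0 <;> rcases i <;>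
      simp [dd3_apply, msign_add, msign_one, msign_zero, h0] <;> ring
  · refine Finset.sum_congr rfl fun k _ => ?_
    rw [Fintype.sum_bool]
    rcases hc : J k.castSucc <;> rcases hs : J k.succ <;>
      simp [dd3_apply, hc, hs, msign_add, msign_one, msign_zero] <;> ring

noncomputable def Gmap {n : ℕ} (φ : Cochain (n+2)) : Cochain (n+1) := fun K i =>
  if i = true then msign (pc K) * φ (Fin.cons true K) true
  else -(msign (pc (Fin.tail K)) * φ (Fin.cons (K 0) (Fin.cons true (Fin.tail K))) false)
       + (if K 0 = false then φ (Fin.cons true (Fin.cons true (Fin.tail K))) true else 0)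

lemma cons_succ_castSucc {n : ℕ} (a : Bool) (J : Idx (n+1)) (i : Fin n) :
    (Fin.cons a J : Idx (n+2)) i.succ.castSucc = J i.castSucc := by
  rw [← Fin.succ_castSucc, Fin.cons_succ]

lemma tail_succ {n : ℕ} (J : Idx (n+2)) (x : Fin n) :
    Fin.tail J x.succ = J x.succ.succ := rfl

lemma tail_zero {n : ℕ} (J : Idx (n+2)) : Fin.tail J 0 = J 1 := rfl

set_option maxHeartbeats 1000000 in
lemma homotopy_true (n : ℕ) (φ : Cochain (n+2)) (J : Idx (n+2)) :
    Dmap dd3 (Gmap φ) J true + Gmap (Dmap dd3 φ) J true = φ J true := by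
  conv_lhs => rw [Dexpand]
  simp only [Gmap, if_pos rfl]
  rw [Dexpand]
  simp only [Fin.cons_zero, Fin.tail_cons, cons_last, init_cons, Fin.sum_univ_succ,
    Fin.succ_zero_eq_one, Fin.cons_one, if_true, Fin.castSucc_zero, Fin.castSucc_one,
    repl_cons_succ, repl_zero, cons_succ_castSucc,
    Fin.val_succ, Fin.val_zero, pcP_cons, pcP_zero, Fin.succ_castSucc, Fin.cons_succ,
    pc_cons, pb_true, pb_false, add_zero, mul_one]
  have hMain : msign (pc J) * (msign (pc J) * φ J true) = φ J true := by
    rw [← mul_assoc, msign_mul_self, one_mul]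
  have hA : (if J (Fin.last (n + 1)) = true then
        msign 1 * (msign (pc (Fin.init J)) * φ (Fin.cons true (Fin.init J)) true) else 0)
      + msign (pc J) * (if J (Fin.last (n + 1)) = true then
        msign 1 * φ (Fin.cons true (Fin.init J)) true else 0) = 0 := by
    by_cases h : J (Fin.last (n + 1)) = true
    · have e : pc J = pc (Fin.init J) + 1 := by rw [pc_init J, h, pb_true]
      rw [if_pos h, if_pos h, e]
      simp [msign, pow_add, pow_succ]; try ring
    · rw [if_neg h, if_neg h]; simp
  have hB : (if J 0 = true then
        msign (pc (Fin.tail J)) * (msign (pc (Fin.tail J)) * φ (Fin.cons true (Fin.tail J)) true) else 0)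
      - msign (pc J) * (if J 0 = true then
        msign (1 + pc (Fin.tail J) + 1 + 1) * φ (Fin.cons true (Fin.tail J)) true else 0) = 0 := by
    by_cases h : J 0 = true
    · have e : pc J = 1 + pc (Fin.tail J) := by rw [pc_tail J, h, pb_true]
      rw [if_pos h, if_pos h, e]
      simp [msign, pow_add, pow_succ]; try ring
    · rw [if_neg h, if_neg h]; simp
  have hCpair : (if J 1 = true then
        msign (pb (J 0) + pc (Fin.tail (Fin.tail J)) + 1 + pb (J 0)) *
          (msign (pb (J 0) + pc (Fin.tail (Fin.tail J))) *
            φ (Fin.cons true (Fin.cons (J 0) (Fin.tail (Fin.tail J)))) true) else 0)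
      + msign (pc J) * (if J 1 = true then
        msign (1 + (pb (J 0) + pc (Fin.tail (Fin.tail J))) + 1 + 1 + pb (J 0)) *
          φ (Fin.cons true (Fin.cons (J 0) (Fin.tail (Fin.tail J)))) true else 0) = 0 := by
    by_cases h : J 1 = true
    · have e : pc J = pb (J 0) + (1 + pc (Fin.tail (Fin.tail J))) := by
        rw [pc_tail J, pc_tail (Fin.tail J), tail_zero, h, pb_true]
      rw [if_pos h, if_pos h, e]
      simp [msign, pow_add, pow_succ]; try ring
    · rw [if_neg h, if_neg h]; simp
  have hS : (∑ x : Fin n,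
        if J x.succ.succ = true then
          msign (pc (repl J x.succ (J x.succ.castSucc)) + 1 + pcP J (↑x + 1) + pb (J x.succ.castSucc)) *
            (msign (pc (repl J x.succ (J x.succ.castSucc))) *
              φ (Fin.cons true (repl J x.succ (J x.succ.castSucc))) true) else 0)
      + msign (pc J) * (∑ x : Fin n,
        if J x.succ.succ = true then
          msign (1 + pc (repl J x.succ (J x.succ.castSucc)) + 1 + (1 + pcP J (↑x + 1)) + pb (J x.succ.castSucc)) *
            φ (Fin.cons true (repl J x.succ (J x.succ.castSucc))) true else 0) = 0 := by
    rw [Finset.mul_sum, ← Finset.sum_add_distrib]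
    refine Finset.sum_eq_zero fun x _ => ?_
    by_cases h : J x.succ.succ = true
    · have e : pc J = pc (repl J x.succ (J x.succ.castSucc)) + 1 := by
        have h2 := pc_repl J x.succ (J x.succ.castSucc)
        rw [h, pb_true] at h2; omega
      rw [if_pos h, if_pos h, e]
      simp [msign, pow_add, pow_succ]; try ring
    · rw [if_neg h, if_neg h]; simp
  linear_combination hA + hB - hCpair - hS + hMain

lemma tail_castSucc {n : ℕ} (J : Idx (n+2)) (x : Fin n) :
    Fin.tail J x.castSucc = J x.succ.castSucc := by
  rw [← Fin.succ_castSucc]; rfl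
lemma pcP_succ_tail {n : ℕ} (J : Idx (n+1)) (t : ℕ) :
    pcP J (t+1) = pb (J 0) + pcP (Fin.tail J) t := by
  conv_lhs => rw [← Fin.cons_self_tail J, pcP_cons]
lemma pc_repl_succ_tail {n : ℕ} (J : Idx (n+2)) (x : Fin n) (j : Bool) :
    pc (repl J x.succ j) = pb (J 0) + pc (repl (Fin.tail J) x j) := by
  conv_lhs => rw [← Fin.cons_self_tail J, repl_cons_succ, pc_cons]

lemma ite_add_zero' (P : Prop) [Decidable P] (a b : ℂ) :
    (if P then a + b else 0) = (if P then a else 0) + (if P then b else 0) := by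
  by_cases h : P <;> simp [h]
lemma ite_sub_zero' (P : Prop) [Decidable P] (a b : ℂ) :
    (if P then a - b else 0) = (if P then a else 0) - (if P then b else 0) := by
  by_cases h : P <;> simp [h]
lemma ite_neg_zero' (P : Prop) [Decidable P] (a : ℂ) :
    (if P then -a else 0) = -(if P then a else 0) := by
  by_cases h : P <;> simp [h]
lemma ite_mul_zero' (P : Prop) [Decidable P] (a b : ℂ) :
    (if P then a * b else 0) = a * (if P then b else 0) := by
  by_cases h : P <;> simp [h]

set_option maxHeartbeats 1000000 in
lemma homotopy_false (n : ℕ) (φ : Cochain (n+2)) (J : Idx (n+2)) :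
    Dmap dd3 (Gmap φ) J false + Gmap (Dmap dd3 φ) J false = φ J false := by
  conv_lhs => rw [Dexpand]
  simp only [Gmap, if_pos rfl, Bool.false_eq_true, if_false]
  simp only [Dexpand]
  simp only [Fin.cons_zero, Fin.tail_cons, cons_last, tail_last, init_cons, init_zero, tail_init,
    tail_zero, tail_castSucc, tail_succ, Fin.cons_succ, cons_succ_castSucc, Fin.castSucc_zero,
    Fin.castSucc_one, Fin.val_zero, Fin.val_succ, Fin.succ_zero_eq_one, Fin.cons_one,
    repl_zero, repl_cons_succ, tail_repl_succ, repl_zero_head,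
    pc_cons, pcP_cons, pcP_zero, pcP_succ_tail, pc_repl_succ_tail,
    Fin.sum_univ_succ, Fin.cons_self_tail, pb_true, pb_false,
    add_zero, mul_zero, mul_one, msign_zero, one_mul, if_true]
  rcases h0 : J 0 <;>
    simp only [h0, Bool.true_eq_false, Bool.false_eq_true, if_false, if_true, if_pos rfl, pb_true,
      pb_false, zero_add, add_zero, mul_one, mul_zero, msign_zero, one_mul,
      ite_add_zero', ite_sub_zero', ite_neg_zero', ite_mul_zero']
  · -- J 0 = false
    have hA1 : -(msign (pc (Fin.init (Fin.tail J))) *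
          if J (Fin.last (n + 1)) = true then φ (Fin.cons false (Fin.cons true (Fin.init (Fin.tail J)))) false else 0)
        - msign (pc (Fin.tail J)) *
          (if J (Fin.last (n + 1)) = true then φ (Fin.cons false (Fin.cons true (Fin.init (Fin.tail J)))) false else 0)
        = 0 := by
      by_cases hL : J (Fin.last (n + 1)) = true
      · have e : pc (Fin.tail J) = pc (Fin.init (Fin.tail J)) + 1 := by
          rw [pc_init (Fin.tail J), tail_last, hL, pb_true]
        rw [if_pos hL, e]
        simp [msign, pow_add, pow_succ]; try ring
      · rw [if_neg hL]; simp
    have hA2 : (if J (Fin.last (n + 1)) = true then φ (Fin.cons true (Fin.cons true (Fin.init (Fin.tail J)))) true else 0)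
        + msign 1 * (if J (Fin.last (n + 1)) = true then φ (Fin.cons true (Fin.cons true (Fin.init (Fin.tail J)))) true else 0)
        = 0 := by rw [msign_one]; ring
    have hY : msign (1 + pc (Fin.tail J)) * φ (Fin.cons true (Fin.tail J)) true
        - msign (1 + pc (Fin.tail J) + 1 + 1) * φ (Fin.cons true (Fin.tail J)) true = 0 := by
      simp [msign, pow_add, pow_succ]; try ring
    have hM : msign (pc (Fin.tail J)) * (msign (pc J) * φ J false) = φ J false := by
      have e : pc J = pc (Fin.tail J) := by rw [pc_tail J, h0, pb_false, Nat.zero_add]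
      rw [e, ← mul_assoc, msign_mul_self, one_mul]
    have hZ : -(msign (pc (Fin.tail (Fin.tail J))) *
          (-(msign (pc (Fin.tail (Fin.tail J))) *
              if J 1 = true then φ (Fin.cons false (Fin.cons true (Fin.tail (Fin.tail J)))) false else 0)
            + if J 1 = true then φ (Fin.cons true (Fin.cons true (Fin.tail (Fin.tail J)))) true else 0))
        + msign (pc (Fin.tail J)) * (msign (1 + pc (Fin.tail (Fin.tail J)) + 1) *
            if J 1 = true then φ (Fin.cons false (Fin.cons true (Fin.tail (Fin.tail J)))) false else 0)
        - msign (1 + (1 + pc (Fin.tail (Fin.tail J))) + 1 + 1 + 1) *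
            (if J 1 = true then φ (Fin.cons true (Fin.cons true (Fin.tail (Fin.tail J)))) true else 0)
        = 0 := by
      by_cases h1 : J 1 = true
      · have e : pc (Fin.tail J) = 1 + pc (Fin.tail (Fin.tail J)) := by
          rw [pc_tail (Fin.tail J), tail_zero, h1, pb_true]
        rw [if_pos h1, if_pos h1, e]
        simp [msign, pow_add, pow_succ]; try ring
      · rw [if_neg h1, if_neg h1]; simp
    have hS : -(∑ x : Fin n,
          msign (pc (repl (Fin.tail J) x (J x.succ.castSucc)) + pcP (Fin.tail J) ↑x + pb (J x.succ.castSucc)) *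
            (-(msign (pc (repl (Fin.tail J) x (J x.succ.castSucc))) *
                if J x.succ.succ = true then
                  φ (Fin.cons false (Fin.cons true (repl (Fin.tail J) x (J x.succ.castSucc)))) false else 0)
              + if J x.succ.succ = true then
                  φ (Fin.cons true (Fin.cons true (repl (Fin.tail J) x (J x.succ.castSucc)))) true else 0))
        + msign (pc (Fin.tail J)) * (∑ x : Fin n,
            msign (1 + pc (repl (Fin.tail J) x (J x.succ.castSucc)) + (1 + pcP (Fin.tail J) ↑x) + pb (J x.succ.castSucc)) *
              if J x.succ.succ = true then
                φ (Fin.cons false (Fin.cons true (repl (Fin.tail J) x (J x.succ.castSucc)))) false else 0)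
        - (∑ x : Fin n,
            msign (1 + (1 + pc (repl (Fin.tail J) x (J x.succ.castSucc))) + 1 + (1 + (1 + pcP (Fin.tail J) ↑x)) + pb (J x.succ.castSucc)) *
              if J x.succ.succ = true then
                φ (Fin.cons true (Fin.cons true (repl (Fin.tail J) x (J x.succ.castSucc)))) true else 0)
        = 0 := by
      rw [Finset.mul_sum, ← Finset.sum_neg_distrib, ← Finset.sum_add_distrib, ← Finset.sum_sub_distrib]
      refine Finset.sum_eq_zero fun x _ => ?_
      by_cases hx : J x.succ.succ = true
      · have e : pc (Fin.tail J) = pc (repl (Fin.tail J) x (J x.succ.castSucc)) + 1 := by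
          have h2 := pc_repl (Fin.tail J) x (J x.succ.castSucc)
          rw [tail_castSucc, tail_succ, hx, pb_true] at h2
          omega
        rw [if_pos hx, if_pos hx, e]
        simp [msign, pow_add, pow_succ]; try ring
      · rw [if_neg hx, if_neg hx]; simp
    linear_combination hA1 + hA2 + hY + hM + hZ + hS
  · -- J 0 = true
    have hA1 : -(msign (pc (Fin.init (Fin.tail J))) *
          if J (Fin.last (n + 1)) = true then φ (Fin.cons true (Fin.cons true (Fin.init (Fin.tail J)))) false else 0)
        - msign (pc (Fin.tail J)) *
          (if J (Fin.last (n + 1)) = true then φ (Fin.cons true (Fin.cons true (Fin.init (Fin.tail J)))) false else 0)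
        = 0 := by
      by_cases hL : J (Fin.last (n + 1)) = true
      · have e : pc (Fin.tail J) = pc (Fin.init (Fin.tail J)) + 1 := by
          rw [pc_init (Fin.tail J), tail_last, hL, pb_true]
        rw [if_pos hL, e]
        simp [msign, pow_add, pow_succ]; try ring
      · rw [if_neg hL]; simp
    have hM : msign (pc (Fin.tail J)) * (msign (pc J + 1) * φ J false) = φ J false := by
      have e : pc J = 1 + pc (Fin.tail J) := by rw [pc_tail J, h0, pb_true]
      have e2 : pc J + 1 = pc (Fin.tail J) + 2 := by rw [e]; ring
      rw [e2, msign_add, show msign 2 = 1 by norm_num [msign], mul_one, ← mul_assoc,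
        msign_mul_self, one_mul]
    have hZ : -(msign (1 + pc (Fin.tail (Fin.tail J)) + 1) *
          -(msign (pc (Fin.tail (Fin.tail J))) *
              if J 1 = true then φ (Fin.cons true (Fin.cons true (Fin.tail (Fin.tail J)))) false else 0))
        + msign (pc (Fin.tail J)) * (msign (1 + (1 + pc (Fin.tail (Fin.tail J))) + 1 + 1) *
            if J 1 = true then φ (Fin.cons true (Fin.cons true (Fin.tail (Fin.tail J)))) false else 0)
        = 0 := by
      by_cases h1 : J 1 = true
      · have e : pc (Fin.tail J) = 1 + pc (Fin.tail (Fin.tail J)) := by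
          rw [pc_tail (Fin.tail J), tail_zero, h1, pb_true]
        rw [if_pos h1, e]
        simp [msign, pow_add, pow_succ]; try ring
      · rw [if_neg h1]; simp
    have hS : -(∑ x : Fin n,
          msign (1 + pc (repl (Fin.tail J) x (J x.succ.castSucc)) + (1 + pcP (Fin.tail J) ↑x) + pb (J x.succ.castSucc)) *
            -(msign (pc (repl (Fin.tail J) x (J x.succ.castSucc))) *
                if J x.succ.succ = true then
                  φ (Fin.cons true (Fin.cons true (repl (Fin.tail J) x (J x.succ.castSucc)))) false else 0))
        + msign (pc (Fin.tail J)) * (∑ x : Fin n,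
            msign (1 + (1 + pc (repl (Fin.tail J) x (J x.succ.castSucc))) + (1 + (1 + pcP (Fin.tail J) ↑x)) + pb (J x.succ.castSucc)) *
              if J x.succ.succ = true then
                φ (Fin.cons true (Fin.cons true (repl (Fin.tail J) x (J x.succ.castSucc)))) false else 0)
        = 0 := by
      rw [Finset.mul_sum, ← Finset.sum_neg_distrib, ← Finset.sum_add_distrib]
      refine Finset.sum_eq_zero fun x _ => ?_
      by_cases hx : J x.succ.succ = true
      · have e : pc (Fin.tail J) = pc (repl (Fin.tail J) x (J x.succ.castSucc)) + 1 := by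
          have h2 := pc_repl (Fin.tail J) x (J x.succ.castSucc)
          rw [tail_castSucc, tail_succ, hx, pb_true] at h2
          omega
        rw [if_pos hx, e]
        simp [msign, pow_add, pow_succ]; try ring
      · rw [if_neg hx]; simp
    linear_combination hA1 + hM + hZ + hS

lemma Dlin_apply (d : Bool → Bool → Bool → ℂ) (n : ℕ) (φ : Cochain n) :
    Dlin d n φ = Dmap d φ := rfl

lemma Gmap_zero (n : ℕ) : Gmap (0 : Cochain (n+2)) = 0 := by
  funext K i
  rcases i <;> simp [Gmap]

lemma homotopy (n : ℕ) (φ : Cochain (n+2)) (J : Idx (n+2)) (i : Bool) :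
    Dmap dd3 (Gmap φ) J i + Gmap (Dmap dd3 φ) J i = φ J i := by
  rcases i
  · exact homotopy_false n φ J
  · exact homotopy_true n φ J

lemma idx1_ext {K L : Idx 1} (h : K 0 = L 0) : K = L :=
  funext fun k => by rw [Subsingleton.elim k 0, h]
lemma idx0_ext (K L : Idx 0) : K = L := funext fun k => k.elim0

set_option maxHeartbeats 1000000 in
lemma deg0_case (φ : Cochain 0) (h : Dmap dd3 φ = 0) : φ = 0 := by
  funext J i
  have h1 := congrFun (congrFun h (fun _ => true)) false
  have h2 := congrFun (congrFun h (fun _ => false)) false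
  rw [Dexpand] at h1 h2
  simp only [Finset.univ_eq_empty, Finset.sum_empty, Pi.zero_apply, pb_false, mul_zero,
    msign_zero, one_mul, if_pos rfl, sub_zero] at h1 h2
  simp only [show ((fun _ => true : Idx 1) 0 = false) = False by simp, if_false, add_zero,
    show ((fun _ => false : Idx 1) 0 = false) = True by simp, if_true,
    show ((fun _ => false : Idx 1) 0 = true) = False by simp, zero_add,
    show ((fun _ => true : Idx 1) 0 = true) = True by simp] at h1 h2
  rcases i
  · rw [idx0_ext J (Fin.init (fun _ => true))]; rw [Pi.zero_apply]; exact h1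
  · rw [idx0_ext J (Fin.tail (fun _ => false))]; rw [Pi.zero_apply]; exact h2

set_option maxHeartbeats 1000000 in
lemma deg1_f (φ : Cochain 1) (h : Dmap dd3 φ = 0) (K : Idx 1) : φ K true = 0 := by
  have hh := congrFun (congrFun h (Fin.cons true K)) true
  rw [Dexpand, Fin.sum_univ_one] at hh
  simp only [Fin.cons_zero, Fin.tail_cons, Pi.zero_apply, if_pos rfl, pb_true, mul_one,
    pcP_zero, add_zero, Fin.castSucc_zero] at hh
  have eL : (Fin.cons true K : Idx 2) (Fin.last 1) = K 0 := by rw [cons_last]; rfl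
  have e1 : (Fin.cons true K : Idx 2) (Fin.succ 0) = K 0 := by rw [Fin.cons_succ]
  rw [eL, e1] at hh
  by_cases hK : K 0 = true
  · have eK : K = fun _ => true := idx1_ext (by rw [hK])
    have eInit : Fin.init (Fin.cons true K : Idx 2) = K := idx1_ext (by rw [init_zero, Fin.cons_zero, hK])
    have eRepl : repl (Fin.cons true K : Idx 2) 0 true = K := idx1_ext (by rw [repl_zero, Fin.cons_zero, hK])
    rw [if_pos hK, eInit, eRepl, if_pos hK] at hh
    have epc : pc K = 1 := by rw [eK]; simp [pc]
    simp only [Fin.val_zero, pcP_zero, add_zero, epc, msign_one] at hh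
    norm_num [msign] at hh
    exact hh
  · have hK' : K 0 = false := by simpa using hK
    have eK : K = fun _ => false := idx1_ext (by rw [hK'])
    rw [if_neg hK, if_neg hK] at hh
    have epc : pc K = 0 := by rw [eK]; simp [pc]
    rw [epc] at hh
    simpa [msign_zero] using hh

lemma pc0 (K : Idx 0) : pc K = 0 := by simp [pc]

set_option maxHeartbeats 1000000 in
lemma deg1_case (φ : Cochain 1) (h : Dmap dd3 φ = 0) :
    Dmap dd3 (fun (_ : Idx 0) i => if i = true then φ (fun _ => false) false
      else φ (fun _ => true) false) = φ := by
  funext J i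
  rw [Dexpand]
  simp only [Finset.univ_eq_empty, Finset.sum_empty, sub_zero]
  have eL : J (Fin.last 0) = J 0 := rfl
  rw [eL]
  rcases i
  · by_cases h0 : J 0 = true
    · have eJ : J = fun _ => true := idx1_ext (by rw [h0])
      rw [eJ]
      norm_num [msign, pc0]
    · have h0' : J 0 = false := by simpa using h0
      have eJ : J = fun _ => false := idx1_ext (by rw [h0'])
      rw [eJ]
      norm_num [msign, pc0]
  · rw [deg1_f φ h J]
    by_cases h0 : J 0 = true
    · have eJ : J = fun _ => true := idx1_ext (by rw [h0])
      rw [eJ]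
      norm_num [msign, pc0]
    · have h0' : J 0 = false := by simpa using h0
      have eJ : J = fun _ => false := idx1_ext (by rw [h0'])
      rw [eJ]
      norm_num [msign, pc0]

lemma mem_Zsp_iff {m : ℕ} (φ : Cochain m) (hφ : φ ∈ Zsp dd3 m) : Dmap dd3 φ = 0 := by
  have := LinearMap.mem_ker.mp hφ
  rw [Dlin_apply] at this
  exact this

lemma mem_Bsp_succ {m : ℕ} (φ : Cochain (m+1)) (ψ : Cochain m) (hψ : Dmap dd3 ψ = φ) :
    φ ∈ Bsp dd3 (m+1) := by
  show φ ∈ LinearMap.range (Dlin dd3 m)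
  exact LinearMap.mem_range.mpr ⟨ψ, by rw [Dlin_apply]; exact hψ⟩

set_option maxHeartbeats 1000000 in

/-- For `d₃ = ψ_e^{ef} − ψ_f^{ff}` the Hochschild cohomology vanishes in all degrees:
every cocycle is a coboundary (in degree `0`: the only cocycle is `0`). -/
theorem d3_cohomology_vanishes : ∀ n : ℕ, Zsp dd3 n ≤ Bsp dd3 n := by
  intro n
  match n with
  | 0 =>
    intro φ hφ
    have h : Dmap dd3 φ = 0 := mem_Zsp_iff φ hφ
    show φ ∈ (⊥ : Submodule ℂ (Cochain 0))
    rw [Submodule.mem_bot]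
    exact deg0_case φ h
  | 1 =>
    intro φ hφ
    have h : Dmap dd3 φ = 0 := mem_Zsp_iff φ hφ
    exact mem_Bsp_succ φ _ (deg1_case φ h)
  | (k + 2) =>
    intro φ hφ
    have h : Dmap dd3 φ = 0 := mem_Zsp_iff φ hφ
    have hh : Dmap dd3 (Gmap φ) = φ := by
      funext J i
      have hom := homotopy k φ J i
      rw [h] at hom
      rw [Gmap_zero, Pi.zero_apply, Pi.zero_apply, add_zero] at hom
      exact hom
    exact mem_Bsp_succ φ (Gmap φ) hh
end

section
/- For the codifferential d₅ = ψ_e^{ef} − ψ_e^{fe} − ψ_f^{ff} on a 1|1-dimensional space, Hⁿ(d₅) is 2-dimensional for every n ≥ 0, spanned by the cochains φ_e^{eⁿ} and φ_f^{eⁿ} (sending e^⊗n to e and to f respectively). -/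
namespace D5

/-! ### Fin index lemmas -/

lemma idx0_eq (J K : Idx 0) : J = K := funext fun i => i.elim0

lemma snoc_zero' {n : ℕ} (X : Idx (n+1)) (b : Bool) : (Fin.snoc X b : Idx (n+2)) 0 = X 0 := by
  rw [show (0 : Fin (n+2)) = (0 : Fin (n+1)).castSucc from (Fin.castSucc_zero).symm,
    Fin.snoc_castSucc]

lemma tail_snoc {n : ℕ} (X : Idx (n+1)) (b : Bool) :
    Fin.tail (Fin.snoc X b : Idx (n+2)) = Fin.snoc (Fin.tail X) b := by
  funext i
  refine Fin.lastCases ?_ (fun j => ?_) i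
  · show (Fin.snoc X b : Idx (n+2)) (Fin.last n).succ = _
    rw [Fin.succ_last, Fin.snoc_last, Fin.snoc_last]
  · show (Fin.snoc X b : Idx (n+2)) (j.castSucc).succ = _
    rw [Fin.succ_castSucc, Fin.snoc_castSucc, Fin.snoc_castSucc]
    rfl

lemma tail_last {n : ℕ} (J : Idx (n+2)) :
    Fin.tail J (Fin.last n) = J (Fin.last (n+1)) := by
  show J (Fin.last n).succ = _
  rw [Fin.succ_last]

lemma init_zero {n : ℕ} (J : Idx (n+2)) : Fin.init J 0 = J 0 := by
  show J ((0 : Fin (n+1)).castSucc) = J 0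
  rw [Fin.castSucc_zero]

lemma init_constFalse {n : ℕ} : Fin.init (fun _ => false : Idx (n+1)) = fun _ => false := by
  funext i; rfl

lemma tail_constFalse {n : ℕ} : Fin.tail (fun _ => false : Idx (n+1)) = fun _ => false := by
  funext i; rfl

lemma snoc_constFalse {n : ℕ} :
    (Fin.snoc (fun _ => false : Idx n) false : Idx (n+1)) = fun _ => false := by
  funext i
  refine Fin.lastCases ?_ (fun j => ?_) i
  · rw [Fin.snoc_last]
  · rw [Fin.snoc_castSucc]

lemma snoc_eq_constFalse_iff {n : ℕ} (X : Idx n) (b : Bool) :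
    (Fin.snoc X b : Idx (n+1)) = (fun _ => false) ↔ (X = (fun _ => false) ∧ b = false) := by
  constructor
  · intro h
    refine ⟨funext fun i => ?_, ?_⟩
    · have := congrFun h i.castSucc
      rwa [Fin.snoc_castSucc] at this
    · have := congrFun h (Fin.last n)
      rwa [Fin.snoc_last] at this
  · rintro ⟨h1, h2⟩
    rw [h1, h2]; exact snoc_constFalse

lemma eq_constFalse_of_head_tail {n : ℕ} (J : Idx (n+1)) (h0 : J 0 = false)
    (ht : Fin.tail J = fun _ => false) : J = fun _ => false := by
  funext i
  refine Fin.cases h0 (fun j => congrFun ht j) i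

lemma eq_constFalse_of_init_last {n : ℕ} (J : Idx (n+1)) (hl : J (Fin.last n) = false)
    (hi : Fin.init J = fun _ => false) : J = fun _ => false := by
  funext i
  refine Fin.lastCases hl (fun j => congrFun hi j) i

/-! ### The recursive operators -/

/-- Parity of the trailing `f`-run. -/
def tpar : ∀ {n : ℕ}, Idx n → Bool
  | 0, _ => false
  | _+1, J => if J (Fin.last _) then !(tpar (Fin.init J)) else false

/-- The (transposed) operator `R`. -/
noncomputable def Rr : ∀ {n : ℕ}, (Idx n → ℂ) → Idx (n+1) → ℂ
  | 0, _, _ => 0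
  | n+1, γ, J =>
      if J (Fin.last (n+1)) then
        (if Fin.init J (Fin.last n) then γ (Fin.init J) else 0)
          - Rr (fun X => γ (Fin.snoc X true)) (Fin.init J)
      else Rr (fun X => γ (Fin.snoc X false)) (Fin.init J)

/-- The (transposed) operator `S`. -/
noncomputable def Sr {n : ℕ} (γ : Idx n → ℂ) : Idx (n+1) → ℂ := fun J =>
  (if J 0 = false then γ (Fin.tail J) else 0)
    - (if J (Fin.last n) = false then γ (Fin.init J) else 0)

/-- The contracting homotopy `k` (transposed). -/
noncomputable def kr : ∀ {n : ℕ}, (Idx (n+1) → ℂ) → Idx n → ℂ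
  | 0, _, _ => 0
  | n+1, β, I =>
      if I (Fin.last n) then (if tpar I then β (Fin.snoc I true) else 0)
      else kr (fun X => β (Fin.snoc X false)) (Fin.init I)

/-- Projection onto the coefficient at `e^n`. -/
noncomputable def pir {n : ℕ} (γ : Idx n → ℂ) : Idx n → ℂ := fun J =>
  if J = (fun _ => false) then γ (fun _ => false) else 0

lemma Rr_zero_eq {γ : Idx 0 → ℂ} {J : Idx 1} : Rr γ J = 0 := rfl

lemma Rr_succ {n : ℕ} (γ : Idx (n+1) → ℂ) (J : Idx (n+2)) :
    Rr γ J = if J (Fin.last (n+1)) then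
        (if Fin.init J (Fin.last n) then γ (Fin.init J) else 0)
          - Rr (fun X => γ (Fin.snoc X true)) (Fin.init J)
      else Rr (fun X => γ (Fin.snoc X false)) (Fin.init J) := rfl

lemma kr_zero_eq {β : Idx 1 → ℂ} {I : Idx 0} : kr β I = 0 := rfl

lemma kr_succ {n : ℕ} (β : Idx (n+2) → ℂ) (I : Idx (n+1)) :
    kr β I = if I (Fin.last n) then (if tpar I then β (Fin.snoc I true) else 0)
      else kr (fun X => β (Fin.snoc X false)) (Fin.init I) := rfl

lemma tpar_snoc_true {n : ℕ} (X : Idx n) :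
    tpar (Fin.snoc X true : Idx (n+1)) = !(tpar X) := by
  show (if (Fin.snoc X true : Idx (n+1)) (Fin.last n) then _ else false) = _
  rw [Fin.snoc_last, Fin.init_snoc]; rfl

lemma tpar_snoc_false {n : ℕ} (X : Idx n) :
    tpar (Fin.snoc X false : Idx (n+1)) = false := by
  show (if (Fin.snoc X false : Idx (n+1)) (Fin.last n) then _ else false) = _
  rw [Fin.snoc_last]; rfl

lemma tpar_succ {n : ℕ} (J : Idx (n+1)) :
    tpar J = if J (Fin.last n) then !(tpar (Fin.init J)) else false := rfl

lemma Rr_zero : ∀ {n : ℕ} (J : Idx (n+1)), Rr (fun (_ : Idx n) => (0:ℂ)) J = 0 := by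
  intro n
  induction n with
  | zero => intro J; rfl
  | succ n ih =>
    intro J
    rw [Rr_succ]
    by_cases h : J (Fin.last (n+1)) <;> simp [h, ih]

lemma Rr_add : ∀ {n : ℕ} (γ δ : Idx n → ℂ) (J : Idx (n+1)),
    Rr (fun I => γ I + δ I) J = Rr γ J + Rr δ J := by
  intro n
  induction n with
  | zero => intro γ δ J; show (0:ℂ) = 0 + 0; rw [add_zero]
  | succ n ih =>
    intro γ δ J
    rw [Rr_succ, Rr_succ γ, Rr_succ δ]
    by_cases h : J (Fin.last (n+1)) <;>
      by_cases h2 : Fin.init J (Fin.last n) <;>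
      simp [h, h2, ih] <;> ring

lemma Rr_neg {n : ℕ} (γ : Idx n → ℂ) (J : Idx (n+1)) : Rr (fun I => -γ I) J = -Rr γ J := by
  have h := Rr_add γ (fun I => -γ I) J
  have h1 : (fun I => γ I + (fun I => -γ I) I) = (fun _ : Idx n => (0:ℂ)) := by
    funext I; simp
  rw [h1, Rr_zero] at h
  linear_combination -h

lemma Rr_sub {n : ℕ} (γ δ : Idx n → ℂ) (J : Idx (n+1)) :
    Rr (fun I => γ I - δ I) J = Rr γ J - Rr δ J := by
  have h1 : (fun I => γ I - δ I) = (fun I => γ I + (fun I => -δ I) I) := by funext I; ring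
  rw [h1, Rr_add, Rr_neg]; ring

lemma kr_zero : ∀ {n : ℕ} (I : Idx n), kr (fun (_ : Idx (n+1)) => (0:ℂ)) I = 0 := by
  intro n
  induction n with
  | zero => intro I; rfl
  | succ n ih =>
    intro I
    rw [kr_succ]
    by_cases h : I (Fin.last n) <;> simp [h, ih]

lemma kr_add : ∀ {n : ℕ} (γ δ : Idx (n+1) → ℂ) (I : Idx n),
    kr (fun J => γ J + δ J) I = kr γ I + kr δ I := by
  intro n
  induction n with
  | zero => intro γ δ I; show (0:ℂ) = 0 + 0; rw [add_zero]
  | succ n ih =>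
    intro γ δ I
    rw [kr_succ, kr_succ γ, kr_succ δ]
    by_cases h : I (Fin.last n) <;> by_cases h2 : tpar I <;>
      simp [h, h2, ih]

lemma kr_neg {n : ℕ} (γ : Idx (n+1) → ℂ) (I : Idx n) : kr (fun J => -γ J) I = -kr γ I := by
  have h := kr_add γ (fun J => -γ J) I
  have h1 : (fun J => γ J + (fun J => -γ J) J) = (fun _ : Idx (n+1) => (0:ℂ)) := by
    funext I; simp
  rw [h1, kr_zero] at h
  linear_combination -h

lemma kr_sub {n : ℕ} (γ δ : Idx (n+1) → ℂ) (I : Idx n) :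
    kr (fun J => γ J - δ J) I = kr γ I - kr δ I := by
  have h1 : (fun J => γ J - δ J) = (fun J => γ J + (fun J => -δ J) J) := by funext I; ring
  rw [h1, kr_add, kr_neg]; ring

end D5
namespace D5

lemma bool_false_of_not_true {b : Bool} (h : ¬b = true) : b = false := by
  cases b; rfl; exact absurd rfl h

lemma if_not_split {b : Bool} {c : ℂ} : (if !b then c else 0) = c - (if b then c else 0) := by
  cases b <;> simp

lemma tpar_zero (X : Idx 0) : tpar X = false := rfl

lemma Rr_snoc_false {n : ℕ} (γ : Idx (n+1) → ℂ) (J' : Idx (n+1)) :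
    Rr γ (Fin.snoc J' false) = Rr (fun X => γ (Fin.snoc X false)) J' := by
  rw [Rr_succ]
  simp [Fin.snoc_last, Fin.init_snoc]

lemma Rr_snoc_true {n : ℕ} (γ : Idx (n+1) → ℂ) (J' : Idx (n+1)) :
    Rr γ (Fin.snoc J' true)
      = (if J' (Fin.last n) then γ J' else 0) - Rr (fun X => γ (Fin.snoc X true)) J' := by
  rw [Rr_succ]
  simp [Fin.snoc_last, Fin.init_snoc]

lemma kr_snoc_false {n : ℕ} (β : Idx (n+2) → ℂ) (X : Idx n) :
    kr β (Fin.snoc X false) = kr (fun Y => β (Fin.snoc Y false)) X := by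
  rw [kr_succ]
  simp [Fin.snoc_last, Fin.init_snoc]

lemma kr_snoc_true {n : ℕ} (β : Idx (n+2) → ℂ) (X : Idx n) :
    kr β (Fin.snoc X true)
      = if !tpar X then β (Fin.snoc (Fin.snoc X true) true) else 0 := by
  rw [kr_succ]
  simp [Fin.snoc_last, tpar_snoc_true]

/-- Lemma L : `P_odd ∘ R = (R - append f) ∘ P_odd` (transposed form). -/
lemma lemL : ∀ {m : ℕ} (γ : Idx m → ℂ) (J : Idx (m+1)),
    (if tpar J then Rr γ J else 0)
      = Rr (fun I => if tpar I then γ I else 0) J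
        - (if J (Fin.last m) then (if tpar (Fin.init J) then γ (Fin.init J) else 0) else 0) := by
  intro m
  induction m with
  | zero =>
    intro γ J
    simp [Rr_zero_eq, tpar_zero]
  | succ n ih =>
    intro γ J
    by_cases hx : J (Fin.last (n+1)) = true
    case neg =>
      have hxf := bool_false_of_not_true hx
      rw [tpar_succ J, hxf, Rr_succ (fun I => if tpar I then γ I else 0), hxf]
      have e1 : (fun X : Idx n => (fun I => if tpar I then γ I else 0) (Fin.snoc X false))
          = (fun _ : Idx n => (0:ℂ)) := by
        funext X
        show (if tpar (Fin.snoc X false) then γ (Fin.snoc X false) else 0) = 0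
        rw [tpar_snoc_false]; rfl
      rw [e1, Rr_zero]
      simp
    case pos =>
      rw [tpar_succ J, hx, Rr_succ γ, Rr_succ (fun I => if tpar I then γ I else 0), hx]
      simp only [if_true]
      set J' := Fin.init J with hJ'def
      have e1 : (fun X : Idx n => (fun I => if tpar I then γ I else 0) (Fin.snoc X true))
          = (fun X : Idx n => γ (Fin.snoc X true)
              - (if tpar X then γ (Fin.snoc X true) else 0)) := by
        funext X
        show (if tpar (Fin.snoc X true) then γ (Fin.snoc X true) else 0) = _
        rw [tpar_snoc_true, if_not_split]
      rw [e1, Rr_sub]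
      have hih := ih (fun X => γ (Fin.snoc X true)) J'
      by_cases hy : J' (Fin.last n) = true
      case pos =>
        have hJ'snoc : Fin.snoc (Fin.init J') true = J' := by
          conv_rhs => rw [← Fin.snoc_init_self J', hy]
        have hpq : tpar J' = !(tpar (Fin.init J')) := by rw [tpar_succ J', hy]; simp
        rw [hy] at hih ⊢
        simp only [if_true] at hih ⊢
        rw [hpq] at hih ⊢
        rw [hJ'snoc] at hih
        cases hq : tpar (Fin.init J') <;> simp [hq] at hih ⊢ <;>
          first | linear_combination hih | linear_combination -hih
      case neg =>
        have hyf := bool_false_of_not_true hy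
        have hp : tpar J' = false := by rw [tpar_succ J', hyf]; rfl
        rw [hyf] at hih ⊢
        rw [hp] at hih ⊢
        simp only [Bool.false_eq_true, Bool.not_false, if_false, if_true, sub_zero,
          zero_sub] at hih ⊢
        first | linear_combination hih | linear_combination -hih |
          linear_combination 2*hih | linear_combination -2*hih

lemma pir_ne {n : ℕ} (γ : Idx n → ℂ) (J : Idx n) (h : ¬J = fun _ => false) :
    pir γ J = 0 := by rw [pir, if_neg h]

lemma pir_last_true {n : ℕ} (γ : Idx (n+1) → ℂ) (J : Idx (n+1))
    (h : J (Fin.last n) = true) : pir γ J = 0 := by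
  apply pir_ne
  intro hc
  rw [hc] at h
  exact Bool.false_ne_true h

/-- The contraction identity `R k + k R = 1 - π`. -/
lemma contraction : ∀ {n : ℕ} (β : Idx (n+1) → ℂ) (J : Idx (n+1)),
    Rr (kr β) J + kr (Rr β) J = β J - pir β J := by
  intro n
  induction n with
  | zero =>
    intro β J
    have h0 : (Fin.last 0) = (0 : Fin 1) := rfl
    by_cases hx : J (Fin.last 0) = true
    case pos =>
      have htp : tpar J = true := by rw [tpar_succ J, hx]; rfl
      have hR : Rr β (Fin.snoc J true) = β J := by
        rw [Rr_snoc_true, hx, if_pos rfl, Rr_zero_eq, sub_zero]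
      rw [show Rr (kr β) J = 0 from rfl, kr_succ, hx, if_pos rfl, htp, if_pos rfl, hR,
        pir_last_true β J hx]
      ring
    case neg =>
      have hxf := bool_false_of_not_true hx
      have hJc : J = fun _ => false := by
        funext i
        rw [show i = Fin.last 0 from Fin.ext (by omega), hxf]
      rw [show Rr (kr β) J = 0 from rfl, kr_succ, hxf]
      simp only [Bool.false_eq_true, if_false, kr_zero_eq]
      rw [pir, if_pos hJc, hJc]
      ring
  | succ n ih =>
    intro β J
    by_cases hx : J (Fin.last (n+1)) = true
    case neg =>
      have hxf := bool_false_of_not_true hx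
      have hJsnoc : Fin.snoc (Fin.init J) false = J := by
        conv_rhs => rw [← Fin.snoc_init_self J, hxf]
      rw [Rr_succ (kr β) J, kr_succ (Rr β) J, hxf]
      simp only [Bool.false_eq_true, if_false]
      have e1 : (fun X : Idx n => kr β (Fin.snoc X false))
          = kr (fun Y => β (Fin.snoc Y false)) := by
        funext X; rw [kr_snoc_false]
      have e2 : (fun X : Idx (n+2) => Rr β (Fin.snoc X false))
          = Rr (fun Y => β (Fin.snoc Y false)) := by
        funext X; rw [Rr_snoc_false]
      rw [e1, e2, ih (fun Y => β (Fin.snoc Y false)) (Fin.init J), hJsnoc]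
      congr 1
      by_cases hc : Fin.init J = fun _ => false
      case pos =>
        rw [pir, if_pos hc, pir, if_pos (eq_constFalse_of_init_last J hxf hc),
          snoc_constFalse]
      case neg =>
        rw [pir_ne _ _ hc, pir_ne]
        intro hJc
        apply hc
        rw [hJc]; exact init_constFalse
    case pos =>
      have hJsnoc : Fin.snoc (Fin.init J) true = J := by
        conv_rhs => rw [← Fin.snoc_init_self J, hx]
      have hpiJ : pir β J = 0 := pir_last_true β J hx
      set J' := Fin.init J with hJ'def
      have hβJ : β (Fin.snoc J' true) = β J := by rw [hJ'def, hJsnoc]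
      rw [Rr_succ (kr β) J, kr_succ (Rr β) J, if_pos hx, if_pos hx]
      have e1 : (fun X : Idx n => kr β (Fin.snoc X true))
          = (fun X : Idx n => β (Fin.snoc (Fin.snoc X true) true)
              - (if tpar X then β (Fin.snoc (Fin.snoc X true) true) else 0)) := by
        funext X; rw [kr_snoc_true, if_not_split]
      rw [e1, Rr_sub]
      have htpJ : tpar J = !(tpar J') := by rw [tpar_succ J, hx]; simp [hJ'def]
      rw [htpJ]
      have hRbJ : Rr β (Fin.snoc J true) = β J - Rr (fun Y => β (Fin.snoc Y true)) J := by
        rw [Rr_snoc_true, if_pos hx]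
      have hRbt : Rr (fun Y => β (Fin.snoc Y true)) J
          = (if J' (Fin.last n) then β J else 0)
            - Rr (fun X : Idx n => β (Fin.snoc (Fin.snoc X true) true)) J' := by
        rw [Rr_succ, if_pos hx, ← hJ'def]
        congr 1
        by_cases hy : J' (Fin.last n) = true
        · rw [if_pos hy, if_pos hy, hβJ]
        · rw [if_neg hy, if_neg hy]
      rw [hRbJ, hRbt, hpiJ]
      have hL := lemL (fun X : Idx n => β (Fin.snoc (Fin.snoc X true) true)) J'
      by_cases hy : J' (Fin.last n) = true
      · rw [if_pos hy] at hL ⊢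
        have hkr : kr β J' = if tpar J' then β J else 0 := by
          rw [kr_succ β J', if_pos hy, hβJ]
        rw [if_pos hy, hkr]
        have hJ'snoc : Fin.snoc (Fin.init J') true = J' := by
          conv_rhs => rw [← Fin.snoc_init_self J', hy]
        have hBhq : β (Fin.snoc (Fin.snoc (Fin.init J') true) true) = β J := by
          rw [hJ'snoc, hβJ]
        rw [hBhq] at hL
        have hpq : tpar J' = !(tpar (Fin.init J')) := by rw [tpar_succ J', hy]; simp
        rw [hpq] at hL ⊢
        cases hq : tpar (Fin.init J') <;>
          simp only [hq, Bool.not_true, Bool.not_false, Bool.false_eq_true, if_false,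
            if_true, sub_zero, zero_sub] at hL ⊢ <;>
          first | linear_combination hL | linear_combination -hL |
            linear_combination 2*hL | linear_combination -2*hL
      · rw [if_neg hy] at hL ⊢
        rw [if_neg hy]
        have hp : tpar J' = false := by rw [tpar_succ J', bool_false_of_not_true hy]; rfl
        rw [hp] at hL ⊢
        simp only [Bool.false_eq_true, Bool.not_false, if_false, if_true, sub_zero,
          zero_sub] at hL ⊢
        first | linear_combination hL | linear_combination -hL |
          linear_combination 2*hL | linear_combination -2*hL

end D5
namespace D5

lemma ne_false_of_true {b : Bool} (h : b = true) : ¬ b = false := by rw [h]; simp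

lemma bool_true_of_not_false {b : Bool} (h : ¬ b = false) : b = true := by
  cases b
  · exact absurd rfl h
  · rfl

lemma Sr_sub {n : ℕ} (γ δ : Idx n → ℂ) (J : Idx (n+1)) :
    Sr (fun I => γ I - δ I) J = Sr γ J - Sr δ J := by
  simp only [Sr]
  by_cases h0 : J 0 = false <;> by_cases hl : J (Fin.last n) = false <;>
    simp [h0, hl] <;> ring

lemma Sr_neg {n : ℕ} (γ : Idx n → ℂ) (J : Idx (n+1)) :
    Sr (fun I => -γ I) J = -Sr γ J := by
  simp only [Sr]
  by_cases h0 : J 0 = false <;> by_cases hl : J (Fin.last n) = false <;>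
    simp [h0, hl] <;> ring

/-- `R` commutes with "prepend `e`". -/
lemma Rr_prepend : ∀ {m : ℕ} (γ : Idx m → ℂ) (J : Idx (m+2)),
    Rr (fun K => if K 0 = false then γ (Fin.tail K) else 0) J
      = if J 0 = false then Rr γ (Fin.tail J) else 0 := by
  intro m
  induction m with
  | zero =>
    intro γ J
    rw [Rr_succ]
    have h00 : Fin.init J (Fin.last 0) = J 0 := by
      rw [show Fin.last 0 = (0 : Fin 1) from rfl, init_zero]
    by_cases hx : J (Fin.last 1) = true
    · rw [if_pos hx]
      by_cases h0 : J 0 = false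
      · rw [if_neg (by rw [h00, h0]; exact Bool.false_ne_true), if_pos h0, Rr_zero_eq,
          Rr_zero_eq, zero_sub, neg_zero]
      · rw [if_neg h0]
        have h0t : J 0 = true := bool_true_of_not_false h0
        rw [if_pos (by rw [h00, h0t]), Rr_zero_eq, sub_zero]
        show (if Fin.init J 0 = false then γ (Fin.tail (Fin.init J)) else 0) = 0
        rw [init_zero, if_neg h0]
    · rw [if_neg hx, Rr_zero_eq]
      by_cases h0 : J 0 = false <;> simp [h0, Rr_zero_eq]
  | succ n ih =>
    intro γ J
    rw [Rr_succ]
    have h0i : J 0 = Fin.init J 0 := (init_zero J).symm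
    have htl : Fin.tail J (Fin.last (n+1)) = J (Fin.last (n+2)) := tail_last J
    have h2 : Fin.init J (Fin.last (n+1)) = Fin.tail (Fin.init J) (Fin.last n) :=
      (tail_last (Fin.init J)).symm
    by_cases hx : J (Fin.last (n+2)) = true
    · rw [if_pos hx]
      have e1 : (fun X : Idx (n+1) => if (Fin.snoc X true : Idx (n+2)) 0 = false
            then γ (Fin.tail (Fin.snoc X true : Idx (n+2))) else 0)
          = (fun X : Idx (n+1) => if X 0 = false
            then (fun Y => γ (Fin.snoc Y true)) (Fin.tail X) else 0) := by
        funext X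
        rw [snoc_zero', tail_snoc]
      rw [e1, ih (fun Y => γ (Fin.snoc Y true)) (Fin.init J)]
      have hrhs : Rr γ (Fin.tail J) = (if Fin.tail (Fin.init J) (Fin.last n) = true then
          γ (Fin.tail (Fin.init J)) else 0)
            - Rr (fun Y => γ (Fin.snoc Y true)) (Fin.tail (Fin.init J)) := by
        rw [Rr_succ, if_pos (show Fin.tail J (Fin.last (n+1)) = true from by
          rw [htl]; exact hx), Fin.tail_init_eq_init_tail]
      rw [hrhs]
      by_cases h0 : J 0 = false
      · have h0' : Fin.init J 0 = false := by rw [← h0i]; exact h0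
        by_cases hy : Fin.init J (Fin.last (n+1)) = true
        · have hy' : Fin.tail (Fin.init J) (Fin.last n) = true := by rw [← h2]; exact hy
          simp [h0, h0', hy, hy']
        · have hyf := bool_false_of_not_true hy
          have hy' : Fin.tail (Fin.init J) (Fin.last n) = false := by rw [← h2]; exact hyf
          simp [h0, h0', hyf, hy']
      · have h0t : J 0 = true := bool_true_of_not_false (fun h => h0 h)
        have h0' : Fin.init J 0 = true := by rw [← h0i]; exact h0t
        by_cases hy : Fin.init J (Fin.last (n+1)) = true
        · simp [h0t, h0', hy]
        · simp [h0t, h0', bool_false_of_not_true hy]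
    · rw [if_neg hx]
      have e1 : (fun X : Idx (n+1) => if (Fin.snoc X false : Idx (n+2)) 0 = false
            then γ (Fin.tail (Fin.snoc X false : Idx (n+2))) else 0)
          = (fun X : Idx (n+1) => if X 0 = false
            then (fun Y => γ (Fin.snoc Y false)) (Fin.tail X) else 0) := by
        funext X
        rw [snoc_zero', tail_snoc]
      rw [e1, ih (fun Y => γ (Fin.snoc Y false)) (Fin.init J), h0i]
      by_cases h0 : Fin.init J 0 = false
      · rw [if_pos h0, if_pos h0]
        rw [Rr_succ, if_neg (show ¬Fin.tail J (Fin.last (n+1)) = true from by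
          rw [htl]; exact hx), Fin.tail_init_eq_init_tail]
      · rw [if_neg h0, if_neg h0]

/-- `R` commutes with "append `e`". -/
lemma Rr_append {m : ℕ} (γ : Idx m → ℂ) (J : Idx (m+2)) :
    Rr (fun K => if K (Fin.last m) = false then γ (Fin.init K) else 0) J
      = if J (Fin.last (m+1)) = false then Rr γ (Fin.init J) else 0 := by
  rw [Rr_succ]
  by_cases hx : J (Fin.last (m+1)) = true
  · rw [if_pos hx, if_neg (ne_false_of_true hx)]
    have e1 : (fun X : Idx m => if (Fin.snoc X true : Idx (m+1)) (Fin.last m) = false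
          then γ (Fin.init (Fin.snoc X true : Idx (m+1))) else 0) = (fun _ : Idx m => (0:ℂ)) := by
      funext X
      rw [Fin.snoc_last, if_neg (by simp)]
    rw [e1, Rr_zero, sub_zero]
    by_cases hy : Fin.init J (Fin.last m) = true
    · rw [if_pos hy, if_neg (ne_false_of_true hy)]
    · rw [if_neg hy]
  · rw [if_neg hx, if_pos (bool_false_of_not_true hx)]
    have e1 : (fun X : Idx m => if (Fin.snoc X false : Idx (m+1)) (Fin.last m) = false
          then γ (Fin.init (Fin.snoc X false : Idx (m+1))) else 0) = γ := by
      funext X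
      rw [Fin.snoc_last, if_pos rfl, Fin.init_snoc]
    rw [e1]

/-- `R` commutes with `S`. -/
lemma Rr_Sr {m : ℕ} (γ : Idx m → ℂ) (J : Idx (m+2)) :
    Rr (Sr γ) J = Sr (Rr γ) J := by
  have e : Rr (Sr γ) J = Rr (fun K => (if K 0 = false then γ (Fin.tail K) else 0)
      - (if K (Fin.last m) = false then γ (Fin.init K) else 0)) J := rfl
  rw [e, Rr_sub, Rr_prepend, Rr_append]
  rfl

lemma Sr_constFalse {n : ℕ} (γ : Idx n → ℂ) : Sr γ (fun _ => false) = 0 := by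
  simp [Sr, tail_constFalse, init_constFalse]

lemma pir_Sr {n : ℕ} (γ : Idx n → ℂ) (J : Idx (n+1)) : pir (Sr γ) J = 0 := by
  rw [pir]
  by_cases h : J = (fun _ => false)
  · rw [if_pos h]
    exact Sr_constFalse γ
  · rw [if_neg h]

lemma Sr_pir {n : ℕ} (γ : Idx n → ℂ) (J : Idx (n+1)) : Sr (pir γ) J = 0 := by
  simp only [Sr]
  by_cases h : J = (fun _ => false)
  · rw [h]
    simp [tail_constFalse, init_constFalse]
  · have h1 : (if J 0 = false then pir γ (Fin.tail J) else 0) = 0 := by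
      by_cases h0 : J 0 = false
      · rw [if_pos h0, pir_ne]
        intro hc
        exact h (eq_constFalse_of_head_tail J h0 hc)
      · rw [if_neg h0]
    have h2 : (if J (Fin.last n) = false then pir γ (Fin.init J) else 0) = 0 := by
      by_cases hl : J (Fin.last n) = false
      · rw [if_pos hl, pir_ne]
        intro hc
        exact h (eq_constFalse_of_init_last J hl hc)
      · rw [if_neg hl]
    rw [h1, h2, sub_self]

lemma Rr_pir : ∀ {n : ℕ} (γ : Idx n → ℂ) (J : Idx (n+1)), Rr (pir γ) J = 0 := by
  intro n
  induction n with
  | zero => intro γ J; rfl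
  | succ n ih =>
    intro γ J
    rw [Rr_succ]
    by_cases hx : J (Fin.last (n+1)) = true
    · rw [if_pos hx]
      have e1 : (fun X : Idx n => pir γ (Fin.snoc X true)) = (fun _ : Idx n => (0:ℂ)) := by
        funext X
        rw [pir_ne]
        intro hc
        exact Bool.false_ne_true ((snoc_eq_constFalse_iff X true).mp hc).2.symm
      rw [e1, Rr_zero, sub_zero]
      by_cases hy : Fin.init J (Fin.last n) = true
      · rw [if_pos hy, pir_ne]
        intro hc
        rw [hc] at hy
        exact Bool.false_ne_true hy
      · rw [if_neg hy]
    · rw [if_neg hx]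
      have e1 : (fun X : Idx n => pir γ (Fin.snoc X false))
          = pir (fun Y : Idx n => γ (Fin.snoc Y false)) := by
        funext X
        rw [pir, pir]
        by_cases hc : X = (fun _ => false)
        · rw [if_pos hc, if_pos (by rw [hc]; exact snoc_constFalse), snoc_constFalse]
        · rw [if_neg (fun hcc => hc ((snoc_eq_constFalse_iff X false).mp hcc).1), if_neg hc]
      rw [e1, ih]

lemma Rr_constFalse : ∀ {n : ℕ} (γ : Idx n → ℂ), Rr γ (fun _ => false) = 0 := by
  intro n
  induction n with
  | zero => intro γ; rfl
  | succ n ih =>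
    intro γ
    rw [Rr_succ, if_neg (by simp), init_constFalse, ih]

end D5
namespace D5

lemma msign_add (a b : ℕ) : msign (a + b) = msign a * msign b := by
  rw [msign, msign, msign, pow_add]

lemma msign_self_mul (a : ℕ) : msign a * msign a = 1 := by
  rw [msign, ← pow_add]
  exact Even.neg_one_pow ⟨a, rfl⟩

lemma msign_even (a : ℕ) : msign (a + a) = 1 := by rw [msign_add, msign_self_mul]

lemma msign_zero : msign 0 = 1 := by rw [msign, pow_zero]

lemma msign_one : msign 1 = -1 := by rw [msign, pow_one]

lemma pb_false : pb false = 0 := rfl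

lemma pb_true : pb true = 1 := rfl

lemma pc_zero (X : Idx 0) : pc X = 0 := by simp [pc]

lemma pc_snoc {n : ℕ} (X : Idx n) (b : Bool) :
    pc (Fin.snoc X b : Idx (n+1)) = pc X + pb b := by
  simp [pc, Fin.sum_univ_castSucc, Fin.snoc_castSucc, Fin.snoc_last]

lemma pcP_eq {n : ℕ} (J : Idx n) (t : ℕ) :
    pcP J t = ∑ i : Fin n, if (i : ℕ) < t then pb (J i) else 0 := by
  rw [pcP, Finset.sum_filter]

lemma pcP_snoc {n : ℕ} (X : Idx n) (b : Bool) (t : ℕ) (h : t ≤ n) :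
    pcP (Fin.snoc X b : Idx (n+1)) t = pcP X t := by
  rw [pcP_eq, pcP_eq, Fin.sum_univ_castSucc]
  have h1 : ¬((Fin.last n : Fin (n+1)) : ℕ) < t := by
    rw [Fin.val_last]; omega
  rw [if_neg h1, add_zero]
  refine Finset.sum_congr rfl (fun i _ => ?_)
  rw [Fin.coe_castSucc, Fin.snoc_castSucc]

lemma pcP_init {n : ℕ} (J : Idx (n+1)) (t : ℕ) (h : t ≤ n) :
    pcP J t = pcP (Fin.init J) t := by
  conv_lhs => rw [← Fin.snoc_init_self J]
  rw [pcP_snoc _ _ _ h]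

lemma pcP_full {n : ℕ} (X : Idx n) : pcP X n = pc X := by
  rw [pcP_eq, pc]
  refine Finset.sum_congr rfl (fun i _ => ?_)
  rw [if_pos i.isLt]

lemma repl_castSucc {n : ℕ} (J : Idx (n+2)) (k : Fin n) (j : Bool) :
    repl J k.castSucc j
      = Fin.snoc (repl (Fin.init J) k j) (J (Fin.last (n+1))) := by
  funext i
  refine Fin.lastCases ?_ (fun i' => ?_) i
  · rw [Fin.snoc_last, repl]
    have h1 : ¬((Fin.last n : Fin (n+1)) : ℕ) < (k.castSucc : ℕ) := by
      rw [Fin.val_last, Fin.coe_castSucc]; omega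
    have h2 : ¬((Fin.last n : Fin (n+1)) : ℕ) = (k.castSucc : ℕ) := by
      rw [Fin.val_last, Fin.coe_castSucc]; omega
    rw [if_neg h1, if_neg h2, Fin.succ_last]
  · rw [Fin.snoc_castSucc, repl, repl]
    simp only [Fin.coe_castSucc]
    by_cases hlt : (i' : ℕ) < (k : ℕ)
    · rw [if_pos hlt, if_pos hlt]; rfl
    · rw [if_neg hlt, if_neg hlt]
      by_cases heq : (i' : ℕ) = (k : ℕ)
      · rw [if_pos heq, if_pos heq]
      · rw [if_neg heq, if_neg heq, Fin.succ_castSucc]; rfl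

lemma repl_last {n : ℕ} (J : Idx (n+2)) (j : Bool) :
    repl J (Fin.last n) j = Fin.snoc (Fin.init (Fin.init J)) j := by
  funext i
  refine Fin.lastCases ?_ (fun i' => ?_) i
  · rw [Fin.snoc_last, repl]
    rw [if_neg (lt_irrefl _), if_pos rfl]
  · rw [Fin.snoc_castSucc, repl]
    rw [if_pos (show ((i'.castSucc : Fin (n+1)) : ℕ) < ((Fin.last n : Fin (n+1)) : ℕ) from by
      rw [Fin.coe_castSucc, Fin.val_last]; exact i'.isLt)]
    rfl

/-- Summand of the explicit (sum) form of `R`. -/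
noncomputable def Ut {n : ℕ} (γ : Idx n → ℂ) (J : Idx (n+1)) (k : Fin n) : ℂ :=
  (if J k.castSucc = false ∧ J k.succ = true then
      -(msign (pc (repl J k false) + pcP J k.val) * γ (repl J k false)) else 0)
  + (if J k.castSucc = true ∧ J k.succ = false then
      msign (pc (repl J k false) + pcP J k.val) * γ (repl J k false) else 0)
  + (if J k.castSucc = true ∧ J k.succ = true then
      msign (pc (repl J k true) + pcP J k.val) * γ (repl J k true) else 0)

/-- Explicit (sum) form of `R`. -/
noncomputable def RtF {n : ℕ} (γ : Idx n → ℂ) (J : Idx (n+1)) : ℂ :=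
  (if J (Fin.last n) = true then γ (Fin.init J) else 0)
  + (if J 0 = true then msign (pc (Fin.tail J) + 1) * γ (Fin.tail J) else 0)
  + ∑ k : Fin n, Ut γ J k

lemma Ut_castSucc {n : ℕ} (γ : Idx (n+1) → ℂ) (J : Idx (n+2)) (k : Fin n) :
    Ut γ J k.castSucc
      = msign (pb (J (Fin.last (n+1))))
        * Ut (fun X => γ (Fin.snoc X (J (Fin.last (n+1))))) (Fin.init J) k := by
  have hc1 : J k.castSucc.castSucc = Fin.init J k.castSucc := rfl
  have hc2 : J k.castSucc.succ = Fin.init J k.succ := by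
    rw [Fin.succ_castSucc]; rfl
  have hpcP : pcP J (k.castSucc : ℕ) = pcP (Fin.init J) (k : ℕ) := by
    rw [Fin.coe_castSucc]
    exact pcP_init J k (le_of_lt (lt_of_lt_of_le k.isLt (Nat.le_succ n)))
  simp only [Ut, hc1, hc2, hpcP, repl_castSucc, pc_snoc]
  by_cases h1 : Fin.init J k.castSucc = false <;>
    by_cases h2 : Fin.init J k.succ = true <;>
    simp [h1, h2, bool_false_of_not_true, bool_true_of_not_false, msign_add] <;>
    ring

lemma Ut_last {n : ℕ} (γ : Idx (n+1) → ℂ) (J : Idx (n+2)) :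
    Ut γ J (Fin.last n)
      = if J (Fin.last (n+1)) = true then -γ (Fin.init J)
        else (if Fin.init J (Fin.last n) = true
          then γ (Fin.snoc (Fin.init (Fin.init J)) false) else 0) := by
  have hc1 : J (Fin.last n).castSucc = Fin.init J (Fin.last n) := rfl
  have hc2 : J (Fin.last n).succ = J (Fin.last (n+1)) := by rw [Fin.succ_last]
  have hpcP : pcP J ((Fin.last n : Fin (n+1)) : ℕ) = pc (Fin.init (Fin.init J)) := by
    rw [Fin.val_last, pcP_init J n (Nat.le_succ n), pcP_init (Fin.init J) n (le_refl n),
      pcP_full]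
  simp only [Ut, hc1, hc2, hpcP, repl_last, pc_snoc]
  by_cases hy : Fin.init J (Fin.last n) = true <;>
    by_cases hx : J (Fin.last (n+1)) = true <;>
    simp [hy, hx, bool_false_of_not_true, pb_true, pb_false, msign_even, msign_add,
      msign_one]
  · rw [msign_self_mul, one_mul,
      show Fin.snoc (Fin.init (Fin.init J)) true = Fin.init J from by
        conv_rhs => rw [← Fin.snoc_init_self (Fin.init J), hy]]
  · rw [show Fin.snoc (Fin.init (Fin.init J)) false = Fin.init J from by
      conv_rhs => rw [← Fin.snoc_init_self (Fin.init J), bool_false_of_not_true hy]]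

end D5
namespace D5

lemma RtF_eq_Rr : ∀ {n : ℕ} (γ : Idx n → ℂ) (J : Idx (n+1)), RtF γ J = Rr γ J := by
  intro n
  induction n with
  | zero =>
    intro γ J
    have e : Fin.init J = Fin.tail J := idx0_eq _ _
    have h0 : (Fin.last 0 : Fin 1) = 0 := rfl
    simp only [RtF, Rr_zero_eq, Finset.univ_eq_empty, Finset.sum_empty, add_zero, h0, e,
      pc_zero, msign_one]
    cases hb : J 0 <;> simp [hb, msign_one] <;> ring
  | succ n ih =>
    intro γ J
    rw [RtF, Fin.sum_univ_castSucc]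
    simp only [Ut_castSucc, Ut_last]
    rw [Rr_succ]
    have h0i : J 0 = Fin.init J 0 := (init_zero J).symm
    by_cases hx : J (Fin.last (n+1)) = true
    · rw [if_pos hx, if_pos hx, if_pos hx]
      have htail : Fin.tail J = Fin.snoc (Fin.tail (Fin.init J)) true := by
        conv_lhs => rw [← Fin.snoc_init_self J, hx]
        rw [tail_snoc]
      rw [← ih (fun X => γ (Fin.snoc X true)) (Fin.init J), RtF]
      simp only [hx, pb_true, msign_one, neg_one_mul, Finset.sum_neg_distrib]
      rw [htail, pc_snoc, pb_true, h0i]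
      by_cases hy : Fin.init J (Fin.last n) = true
      · rw [if_pos hy, if_pos hy]
        have hsn : Fin.snoc (Fin.init (Fin.init J)) true = Fin.init J := by
          conv_rhs => rw [← Fin.snoc_init_self (Fin.init J), hy]
        rw [hsn]
        by_cases h0 : Fin.init J 0 = true
        · rw [if_pos h0, if_pos h0, msign_add (pc (Fin.tail (Fin.init J)) + 1) 1,
            msign_one]
          ring
        · rw [if_neg h0, if_neg h0]
          ring
      · rw [if_neg hy, if_neg hy]
        by_cases h0 : Fin.init J 0 = true
        · rw [if_pos h0, if_pos h0, msign_add (pc (Fin.tail (Fin.init J)) + 1) 1,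
            msign_one]
          ring
        · rw [if_neg h0, if_neg h0]
          ring
    · have hxf := bool_false_of_not_true hx
      rw [if_neg hx, if_neg hx, if_neg hx]
      have htail : Fin.tail J = Fin.snoc (Fin.tail (Fin.init J)) false := by
        conv_lhs => rw [← Fin.snoc_init_self J, hxf]
        rw [tail_snoc]
      rw [← ih (fun X => γ (Fin.snoc X false)) (Fin.init J), RtF]
      simp only [hxf, pb_false, msign_zero, one_mul]
      rw [htail, pc_snoc, pb_false, add_zero, h0i]
      ring

end D5
namespace D5

lemma Dmap_eq {n : ℕ} (φ : Cochain n) (J : Idx (n+1)) (i : Bool) :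
    Dmap dd5 φ J i
      = if i = true then -(RtF (fun I => φ I true) J)
        else RtF (fun I => φ I false) J + Sr (fun I => φ I true) J := by
  have epre : (fun k : Fin n => J k.castSucc) = Fin.init J := rfl
  have etail : (fun k : Fin n => J k.succ) = Fin.tail J := rfl
  have h3 : (∑ k : Fin n, ∑ j : Bool, msign (pc (repl J k j) + pb i + pcP J k.val) *
        (φ (repl J k j) i * dd5 (J k.castSucc) (J k.succ) j))
      = -(msign (pb i) * ∑ k : Fin n, Ut (fun I => φ I i) J k) := by
    rw [Finset.mul_sum, ← Finset.sum_neg_distrib]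
    refine Finset.sum_congr rfl (fun k _ => ?_)
    rw [Fintype.sum_bool]
    cases hc1 : J k.castSucc <;> cases hc2 : J k.succ <;>
      simp [Ut, dd5, delta2, hc1, hc2, msign_add, pb_true, pb_false, msign_zero,
        msign_one] <;>
      ring
  show (∑ j : Bool, φ (fun k => J k.castSucc) j * dd5 j (J (Fin.last n)) i)
      + (∑ j : Bool, msign ((pc (fun k : Fin n => J k.succ) + pb j) * pb (J 0)) *
          (φ (fun k => J k.succ) j * dd5 (J 0) j i))
      - (∑ k : Fin n, ∑ j : Bool, msign (pc (repl J k j) + pb i + pcP J k.val) *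
          (φ (repl J k j) i * dd5 (J k.castSucc) (J k.succ) j)) = _
  rw [h3, Fintype.sum_bool, Fintype.sum_bool, epre, etail]
  cases i <;>
    by_cases hl : J (Fin.last n) = true <;>
    by_cases h00 : J 0 = true <;>
    simp [RtF, Sr, dd5, delta2, hl, h00, bool_false_of_not_true, pb_true, pb_false,
      msign_zero, msign_one, msign_add] <;>
    ring

end D5
namespace D5

lemma Sr_zero {n : ℕ} (J : Idx (n+1)) : Sr (fun _ : Idx n => (0:ℂ)) J = 0 := by
  simp [Sr]

lemma phiE_false (n : ℕ) : (fun I => phiE n I false) = pir (fun _ : Idx n => (1:ℂ)) := by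
  funext I
  simp [phiE, bC, pir]

lemma phiE_true (n : ℕ) : (fun I => phiE n I true) = (fun _ : Idx n => (0:ℂ)) := by
  funext I
  simp [phiE, bC]

lemma phiF_false (n : ℕ) : (fun I => phiF n I false) = (fun _ : Idx n => (0:ℂ)) := by
  funext I
  simp [phiF, bC]

lemma phiF_true (n : ℕ) : (fun I => phiF n I true) = pir (fun _ : Idx n => (1:ℂ)) := by
  funext I
  simp [phiF, bC, pir]

lemma Dlin_apply (d : Bool → Bool → Bool → ℂ) {n : ℕ} (φ : Cochain n) :
    Dlin d n φ = Dmap d φ := rfl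

lemma phiE_cocycle (n : ℕ) : phiE n ∈ Zsp dd5 n := by
  rw [Zsp, LinearMap.mem_ker, Dlin_apply]
  funext J i
  rw [Dmap_eq]
  cases i
  · show RtF (fun I => phiE n I false) J + Sr (fun I => phiE n I true) J = 0
    rw [phiE_false, phiE_true, RtF_eq_Rr, Rr_pir, Sr_zero, add_zero]
  · show -(RtF (fun I => phiE n I true) J) = 0
    rw [phiE_true, RtF_eq_Rr, Rr_zero, neg_zero]

lemma phiF_cocycle (n : ℕ) : phiF n ∈ Zsp dd5 n := by
  rw [Zsp, LinearMap.mem_ker, Dlin_apply]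
  funext J i
  rw [Dmap_eq]
  cases i
  · show RtF (fun I => phiF n I false) J + Sr (fun I => phiF n I true) J = 0
    rw [phiF_false, phiF_true, RtF_eq_Rr, Rr_zero, Sr_pir, add_zero]
  · show -(RtF (fun I => phiF n I true) J) = 0
    rw [phiF_true, RtF_eq_Rr, Rr_pir, neg_zero]

lemma Dmap_constFalse {n : ℕ} (ψ : Cochain n) (i : Bool) :
    Dmap dd5 ψ (fun _ => false) i = 0 := by
  rw [Dmap_eq]
  cases i
  · show RtF _ _ + Sr _ _ = 0
    rw [RtF_eq_Rr, Rr_constFalse, Sr_constFalse, add_zero]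
  · show -(RtF _ _) = 0
    rw [RtF_eq_Rr, Rr_constFalse, neg_zero]

lemma Bsp_vanish {n : ℕ} (χ : Cochain n) (hχ : χ ∈ Bsp dd5 n) (i : Bool) :
    χ (fun _ => false) i = 0 := by
  cases n with
  | zero =>
    rw [show Bsp dd5 0 = ⊥ from rfl, Submodule.mem_bot] at hχ
    rw [hχ]
    rfl
  | succ m =>
    obtain ⟨ψ, hψ⟩ := hχ
    rw [← hψ, Dlin_apply]
    exact Dmap_constFalse ψ i

/-- Construction of a primitive for a cocycle minus its harmonic part. -/
lemma primitive {n : ℕ} (φ : Cochain (n+1)) (hφ : Dlin dd5 (n+1) φ = 0) :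
    ∃ ψ : Cochain n, Dlin dd5 n ψ
      = φ - ((φ (fun _ => false) false) • phiE (n+1) + (φ (fun _ => false) true) • phiF (n+1)) := by
  set A : Idx (n+1) → ℂ := fun I => φ I false with hAdef
  set B : Idx (n+1) → ℂ := fun I => φ I true with hBdef
  rw [Dlin_apply] at hφ
  have hB : Rr B = (fun _ => 0) := by
    funext K
    have h := congrFun (congrFun hφ K) true
    rw [Dmap_eq, if_pos rfl, RtF_eq_Rr] at h
    rw [show (0 : Cochain (n+2)) K true = 0 from rfl] at h
    show Rr B K = 0
    linear_combination -h
  have hA : Rr A = (fun K => -(Sr B K)) := by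
    funext K
    have h := congrFun (congrFun hφ K) false
    rw [Dmap_eq, if_neg (by simp : ¬(false = true)), RtF_eq_Rr] at h
    rw [show (0 : Cochain (n+2)) K false = 0 from rfl] at h
    show Rr A K = -(Sr B K)
    linear_combination h
  have hRkB : Rr (kr B) = (fun K => B K - pir B K) := by
    funext K
    have h := contraction B K
    rw [hB, kr_zero, add_zero] at h
    exact h
  have hRSkB : Rr (Sr (kr B)) = (fun K => Sr B K) := by
    funext K
    rw [Rr_Sr, hRkB]
    have := Sr_sub B (pir B) K
    rw [this, Sr_pir, sub_zero]
  refine ⟨fun I i => if i = true then -(kr B I) else kr A I + kr (Sr (kr B)) I, ?_⟩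
  rw [Dlin_apply]
  funext J i
  rw [Dmap_eq]
  have hcomp_t : (fun I => (fun I i => if i = true then -(kr B I)
      else kr A I + kr (Sr (kr B)) I) I true) = (fun I => -(kr B I)) := by
    funext I; simp
  have hcomp_f : (fun I => (fun I i => if i = true then -(kr B I)
      else kr A I + kr (Sr (kr B)) I) I false) = (fun I => kr A I + kr (Sr (kr B)) I) := by
    funext I; simp
  cases i
  · simp only [Bool.false_eq_true, if_false, if_true, eq_self_iff_true]
    rw [RtF_eq_Rr]
    have h1 : Rr (fun I => kr A I + kr (Sr (kr B)) I) J
        = Rr (kr A) J + Rr (kr (Sr (kr B))) J := Rr_add _ _ J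
    have h2 : Rr (kr A) J = A J - pir A J - kr (Rr A) J := by
      have := contraction A J
      linear_combination this
    have h3 : kr (Rr A) J = -(kr (Sr B) J) := by
      rw [hA, kr_neg]
    have h4 : Rr (kr (Sr (kr B))) J
        = Sr (kr B) J - kr (Rr (Sr (kr B))) J := by
      have := contraction (Sr (kr B)) J
      rw [pir_Sr] at this
      linear_combination this
    have h5 : kr (Rr (Sr (kr B))) J = kr (Sr B) J := by rw [hRSkB]
    have h6 : Sr (fun I => -(kr B I)) J = -(Sr (kr B) J) := Sr_neg _ J
    rw [h1, h2, h3, h4, h5, h6]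
    show A J - pir A J - -(kr (Sr B) J) + (Sr (kr B) J - kr (Sr B) J) + -(Sr (kr B) J)
      = φ J false - ((φ (fun _ => false) false) • phiE (n+1)
        + (φ (fun _ => false) true) • phiF (n+1)) J false
    simp only [Pi.add_apply, Pi.smul_apply, smul_eq_mul]
    rw [pir]
    by_cases hc : J = (fun _ => false)
    · rw [if_pos hc, hc]
      simp [phiE, phiF, bC, hAdef]
    · rw [if_neg hc]
      simp [phiE, phiF, bC, hc, hAdef]
  · simp only [Bool.false_eq_true, if_false, if_true, eq_self_iff_true]
    rw [RtF_eq_Rr]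
    have h1 : Rr (fun I => -(kr B I)) J = -(Rr (kr B) J) := Rr_neg _ J
    rw [h1, neg_neg, hRkB]
    show B J - pir B J = φ J true - ((φ (fun _ => false) false) • phiE (n+1)
        + (φ (fun _ => false) true) • phiF (n+1)) J true
    simp only [Pi.add_apply, Pi.smul_apply, smul_eq_mul]
    rw [pir]
    by_cases hc : J = (fun _ => false)
    · rw [if_pos hc, hc]
      simp [phiE, phiF, bC, hBdef]
    · rw [if_neg hc]
      simp [phiE, phiF, bC, hc, hBdef]

/-- Every cocycle decomposes. -/
lemma decompose (n : ℕ) (φ : Cochain n) (hφ : φ ∈ Zsp dd5 n) :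
    ∃ a b : ℂ, φ - (a • phiE n + b • phiF n) ∈ Bsp dd5 n := by
  cases n with
  | zero =>
    refine ⟨φ (fun _ => false) false, φ (fun _ => false) true, ?_⟩
    rw [show Bsp dd5 0 = ⊥ from rfl, Submodule.mem_bot]
    funext J i
    have hJ : J = fun _ => false := funext fun i0 => i0.elim0
    simp only [Pi.sub_apply, Pi.add_apply, Pi.smul_apply, smul_eq_mul, hJ]
    cases i <;> simp [phiE, phiF, bC]
  | succ m =>
    rw [Zsp, LinearMap.mem_ker] at hφ
    obtain ⟨ψ, hψ⟩ := primitive φ hφ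
    exact ⟨φ (fun _ => false) false, φ (fun _ => false) true, ⟨ψ, hψ⟩⟩

end D5
namespace D5

/-- Evaluation of a cocycle at `e^n`. -/
noncomputable def LZ (n : ℕ) : Zsp dd5 n →ₗ[ℂ] ℂ × ℂ where
  toFun x := (x.1 (fun _ => false) false, x.1 (fun _ => false) true)
  map_add' x y := rfl
  map_smul' c x := rfl

lemma LZ_apply (n : ℕ) (x : Zsp dd5 n) :
    LZ n x = (x.1 (fun _ => false) false, x.1 (fun _ => false) true) := rfl

lemma hN_le_ker (n : ℕ) :
    Submodule.comap (Zsp dd5 n).subtype (Bsp dd5 n) ≤ LinearMap.ker (LZ n) := by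
  intro x hx
  rw [Submodule.mem_comap] at hx
  rw [LinearMap.mem_ker, LZ_apply, Prod.mk_eq_zero]
  exact ⟨Bsp_vanish x.1 hx false, Bsp_vanish x.1 hx true⟩

lemma hker_le_N (n : ℕ) :
    LinearMap.ker (LZ n) ≤ Submodule.comap (Zsp dd5 n).subtype (Bsp dd5 n) := by
  intro x hx
  rw [LinearMap.mem_ker, LZ_apply, Prod.mk_eq_zero] at hx
  obtain ⟨hx1, hx2⟩ := hx
  obtain ⟨a, b, hab⟩ := decompose n x.1 x.2
  have hva := Bsp_vanish _ hab false
  have hvb := Bsp_vanish _ hab true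
  simp only [Pi.sub_apply, Pi.add_apply, Pi.smul_apply, smul_eq_mul, hx1, hx2,
    phiE, phiF, bC] at hva hvb
  simp at hva hvb
  rw [hva, hvb] at hab
  rw [Submodule.mem_comap]
  simpa using hab

lemma LZ_combo (n : ℕ) (u v : ℂ) :
    LZ n (u • ⟨phiE n, phiE_cocycle n⟩ + v • ⟨phiF n, phiF_cocycle n⟩) = (u, v) := by
  rw [LZ_apply]
  have h1 : ((u • (⟨phiE n, phiE_cocycle n⟩ : Zsp dd5 n)
      + v • ⟨phiF n, phiF_cocycle n⟩) : Zsp dd5 n).1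
      = u • phiE n + v • phiF n := rfl
  rw [h1]
  simp [phiE, phiF, bC]

lemma rank_two (n : ℕ) : Module.rank ℂ (Hsp dd5 n) = 2 := by
  set N := Submodule.comap (Zsp dd5 n).subtype (Bsp dd5 n) with hN
  set T := Submodule.liftQ N (LZ n) (hN_le_ker n) with hT
  have hinj : Function.Injective T := by
    rw [← LinearMap.ker_eq_bot]
    exact Submodule.ker_liftQ_eq_bot N (LZ n) (hN_le_ker n) (hker_le_N n)
  have hsurj : Function.Surjective T := by
    intro p
    refine ⟨Submodule.Quotient.mk (p.1 • ⟨phiE n, phiE_cocycle n⟩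
      + p.2 • ⟨phiF n, phiF_cocycle n⟩), ?_⟩
    rw [hT, Submodule.liftQ_apply, LZ_combo]
  have e : Hsp dd5 n ≃ₗ[ℂ] ℂ × ℂ := LinearEquiv.ofBijective T ⟨hinj, hsurj⟩
  rw [e.rank_eq, rank_prod', Module.rank_self]
  norm_num

end D5

/-- For `d₅ = ψ_e^{ef} − ψ_e^{fe} − ψ_f^{ff}`: `Hⁿ(d₅)` is 2-dimensional for every
`n ≥ 0`, spanned by the classes of the cocycles `φ_e^{eⁿ}` and `φ_f^{eⁿ}`. -/
theorem d5_cohomology :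
    ∀ n : ℕ,
      phiE n ∈ Zsp dd5 n
        ∧ phiF n ∈ Zsp dd5 n
        ∧ Module.rank ℂ (Hsp dd5 n) = 2
        ∧ ∀ φ ∈ Zsp dd5 n, ∃ a b : ℂ, φ - (a • phiE n + b • phiF n) ∈ Bsp dd5 n := by
  intro n
  exact ⟨D5.phiE_cocycle n, D5.phiF_cocycle n, D5.rank_two n, fun φ hφ => D5.decompose n φ hφ⟩
end

section
/- For the codifferential d₅ = ψ_e^{ef} − ψ_e^{fe} − ψ_f^{ff}, both φ_e^{eⁿ} and φ_f^{eⁿ} are Hochschild cocycles: D(φ_e^{eⁿ}) = 0 and D(φ_f^{eⁿ}) = 0 for all n ≥ 0. -/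
/-! ### Auxiliary machinery for the proof -/

/-- The all-`e` multi-index. -/
abbrev EE (n : ℕ) : Idx n := fun _ => false

/-- The multi-index which is `f` at position `t` and `e` elsewhere. -/
def dI {n : ℕ} (t : Fin n) : Idx n := fun s => decide (s = t)

/-- Indicator that `J = dI t`. -/
noncomputable def Fd {n : ℕ} (J : Idx n) (t : Fin n) : ℂ := if J = dI t then 1 else 0

lemma pc_EE (n : ℕ) : pc (EE n) = 0 := by simp [pc, pb]

lemma msign_pb (b : Bool) : msign (pb b) = if b then -1 else 1 := by
  cases b <;> simp [msign, pb]

lemma repl_true_ne {n : ℕ} (J : Idx (n + 1)) (k : Fin n) :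
    repl J k true ≠ EE n := by
  intro h
  have := congrFun h k
  simp [repl, EE] at this

lemma J_of_repl {n : ℕ} {J : Idx (n + 1)} {k : Fin n}
    (h : repl J k false = EE n) (s : Fin (n + 1))
    (h1 : s ≠ k.castSucc) (h2 : s ≠ k.succ) : J s = false := by
  rcases lt_trichotomy s.val k.val with hlt | heq | hgt
  · have hs : s.val < n := lt_trans hlt k.isLt
    have := congrFun h ⟨s.val, hs⟩
    simp only [repl, EE] at this
    rw [if_pos hlt] at this
    have hc : (⟨s.val, hs⟩ : Fin n).castSucc = s := by
      apply Fin.ext; simp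
    rwa [hc] at this
  · exact absurd (Fin.ext (by simpa using heq.symm) : k.castSucc = s).symm h1
  · have hgt' : k.val + 1 ≤ s.val := hgt
    rcases eq_or_lt_of_le hgt' with heq1 | hgt1
    · exact absurd (Fin.ext (by simpa using heq1) : k.succ = s).symm h2
    · have hs : s.val - 1 < n := by omega
      have := congrFun h ⟨s.val - 1, hs⟩
      simp only [repl, EE] at this
      rw [if_neg (by omega), if_neg (by omega)] at this
      have hc : (⟨s.val - 1, hs⟩ : Fin n).succ = s := by
        apply Fin.ext; simp; omega
      rwa [hc] at this

lemma pcP_zero_s12 {n : ℕ} {J : Idx (n + 1)} {k : Fin n}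
    (h : repl J k false = EE n) : pcP J k.val = 0 := by
  unfold pcP
  apply Finset.sum_eq_zero
  intro s hs
  simp only [Finset.mem_filter] at hs
  have hJ : J s = false := by
    apply J_of_repl h
    · intro he; rw [he] at hs; exact absurd hs.2 (by simp)
    · intro he; rw [he] at hs
      have h2 := hs.2
      rw [Fin.val_succ] at h2
      omega
  simp [hJ, pb]

lemma repl_dI_castSucc {n : ℕ} (k : Fin n) :
    repl (dI k.castSucc) k false = EE n := by
  funext s
  simp only [repl, dI, EE]
  split_ifs with h1 h2
  · simp only [decide_eq_false_iff_not]
    intro he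
    have := congrArg Fin.val he
    simp at this; omega
  · rfl
  · simp only [decide_eq_false_iff_not]
    intro he
    have := congrArg Fin.val he
    simp at this; omega

lemma repl_dI_succ {n : ℕ} (k : Fin n) :
    repl (dI k.succ) k false = EE n := by
  funext s
  simp only [repl, dI, EE]
  split_ifs with h1 h2
  · simp only [decide_eq_false_iff_not]
    intro he
    have := congrArg Fin.val he
    simp at this; omega
  · rfl
  · simp only [decide_eq_false_iff_not]
    intro he
    have := congrArg Fin.val he
    simp at this; omega

lemma eq_dI_iff {n : ℕ} {J : Idx (n + 1)} {k : Fin n} (t : Fin (n + 1))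
    (h : repl J k false = EE n) (ht : t = k.castSucc ∨ t = k.succ) :
    J = dI t ↔ (J t = true ∧ J (if t = k.castSucc then k.succ else k.castSucc) = false) := by
  have hne : k.castSucc ≠ k.succ := by
    intro he; have := congrArg Fin.val he; simp at this
  constructor
  · intro hJ
    subst hJ
    constructor
    · simp [dI]
    · simp only [dI, decide_eq_false_iff_not]
      rcases ht with h' | h' <;> subst h' <;> simp [hne, hne.symm]
  · rintro ⟨h1, h2⟩
    funext s
    by_cases hs1 : s = k.castSucc
    · subst hs1
      rcases ht with h' | h'
      · subst h'; simp [dI, h1]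
      · subst h'
        rw [if_neg hne.symm] at h2
        simp [dI, h2, hne]
    · by_cases hs2 : s = k.succ
      · subst hs2
        rcases ht with h' | h'
        · subst h'
          rw [if_pos rfl] at h2
          simp [dI, h2, hne.symm]
        · subst h'; simp [dI, h1]
      · rw [J_of_repl h s hs1 hs2]
        symm
        simp only [dI, decide_eq_false_iff_not]
        intro he
        rcases ht with h' | h' <;> subst h' <;> [exact hs1 he; exact hs2 he]

lemma tele {n : ℕ} (F : Fin (n + 1) → ℂ) :
    ∑ k : Fin n, (F k.succ - F k.castSucc) = F (Fin.last n) - F 0 := by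
  induction n with
  | zero => simp [Fin.last]
  | succ m ih =>
    rw [Fin.sum_univ_castSucc]
    have := ih (fun t => F t.castSucc)
    simp only [Fin.succ_castSucc] at this ⊢
    rw [this, Fin.succ_last]
    simp only [Fin.castSucc_zero]
    ring

lemma term3_eq {n : ℕ} (J : Idx (n + 1)) (i i' : Bool) (k : Fin n) :
    (∑ j : Bool, msign (pc (repl J k j) + pb i' + pcP J k.val) *
      (bC (EE n) i (repl J k j) i' * dd5 (J k.castSucc) (J k.succ) j))
    = (if i' = i then msign (pb i) * (Fd J k.succ - Fd J k.castSucc) else 0) := by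
  rw [Fintype.sum_bool]
  have htrue : bC (EE n) i (repl J k true) i' = 0 := by
    simp [bC, repl_true_ne J k]
  rw [htrue]
  by_cases h : repl J k false = EE n
  · have hpc : pc (repl J k false) = 0 := by rw [h]; exact pc_EE n
    have hpcP : pcP J k.val = 0 := pcP_zero_s12 h
    have hbC : bC (EE n) i (repl J k false) i' = if i' = i then 1 else 0 := by
      simp [bC, h]
    rw [hpc, hpcP, hbC]
    have hne : k.succ ≠ k.castSucc := by
      intro he; have := congrArg Fin.val he; simp at this
    have hFs : Fd J k.succ = if J k.succ = true ∧ J k.castSucc = false then 1 else 0 := by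
      rw [Fd]
      simp only [eq_dI_iff k.succ h (Or.inr rfl), if_neg hne]
    have hFc : Fd J k.castSucc = if J k.castSucc = true ∧ J k.succ = false then 1 else 0 := by
      rw [Fd]
      simp only [eq_dI_iff k.castSucc h (Or.inl rfl), if_pos rfl, if_true]
    rw [hFs, hFc]
    cases hc : J k.castSucc <;> cases hs : J k.succ <;> cases i' <;> cases i <;>
      simp [dd5, delta2, msign, pb, pc_EE]
  · have hbC : bC (EE n) i (repl J k false) i' = 0 := by simp [bC, h]
    have hFs : Fd J k.succ = 0 := by
      rw [Fd, if_neg]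
      intro he; rw [he] at h; exact h (repl_dI_succ k)
    have hFc : Fd J k.castSucc = 0 := by
      rw [Fd, if_neg]
      intro he; rw [he] at h; exact h (repl_dI_castSucc k)
    rw [hbC, hFs, hFc]
    simp

lemma term3_sum {n : ℕ} (J : Idx (n + 1)) (i i' : Bool) :
    (∑ k : Fin n, ∑ j : Bool, msign (pc (repl J k j) + pb i' + pcP J k.val) *
        (bC (EE n) i (repl J k j) i' * dd5 (J k.castSucc) (J k.succ) j))
    = if i' = i then msign (pb i) * (Fd J (Fin.last n) - Fd J 0) else 0 := by
  rw [Finset.sum_congr rfl (fun k _ => term3_eq J i i' k)]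
  by_cases hii : i' = i
  · simp only [if_pos hii, ← Finset.mul_sum, tele]
  · simp [hii]

lemma term1_eq {n : ℕ} (J : Idx (n + 1)) (i i' : Bool) :
    (∑ j : Bool, bC (EE n) i (fun k => J k.castSucc) j * dd5 j (J (Fin.last n)) i')
    = if (fun k : Fin n => J k.castSucc) = EE n then dd5 i (J (Fin.last n)) i' else 0 := by
  rw [Fintype.sum_bool]
  cases i <;> by_cases h : (fun k : Fin n => J k.castSucc) = EE n <;> simp [bC, h]

lemma term2_eq {n : ℕ} (J : Idx (n + 1)) (i i' : Bool) :
    (∑ j : Bool, msign ((pc (fun k : Fin n => J k.succ) + pb j) * pb (J 0)) *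
      (bC (EE n) i (fun k => J k.succ) j * dd5 (J 0) j i'))
    = if (fun k : Fin n => J k.succ) = EE n then
        msign (pb i * pb (J 0)) * dd5 (J 0) i i' else 0 := by
  rw [Fintype.sum_bool]
  by_cases h : (fun k : Fin n => J k.succ) = EE n
  · have h0 : pc (fun k : Fin n => J k.succ) = 0 := by rw [h]; exact pc_EE n
    rw [h0]
    cases i <;> simp [bC, h]
  · simp [bC, h]

lemma prefix_dI_iff {n : ℕ} (J : Idx (n + 1)) :
    J = dI (Fin.last n) ↔
      ((fun k : Fin n => J k.castSucc) = EE n ∧ J (Fin.last n) = true) := by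
  constructor
  · intro hJ
    subst hJ
    refine ⟨funext fun k => ?_, by simp [dI]⟩
    simp only [dI, EE, decide_eq_false_iff_not]
    intro he
    have := congrArg Fin.val he
    simp [Fin.last] at this
    omega
  · rintro ⟨h1, h2⟩
    funext s
    by_cases hs : s.val < n
    · have := congrFun h1 ⟨s.val, hs⟩
      have hc : (⟨s.val, hs⟩ : Fin n).castSucc = s := by apply Fin.ext; simp
      rw [hc] at this
      rw [this]
      symm
      simp only [dI, decide_eq_false_iff_not]
      intro he
      have := congrArg Fin.val he
      simp [Fin.last] at this
      omega
    · have hs' : s = Fin.last n := by apply Fin.ext; have := s.isLt; simp [Fin.last]; omega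
      subst hs'
      simp [dI, h2]

lemma suffix_dI_iff {n : ℕ} (J : Idx (n + 1)) :
    J = dI 0 ↔ ((fun k : Fin n => J k.succ) = EE n ∧ J 0 = true) := by
  constructor
  · intro hJ
    subst hJ
    refine ⟨funext fun k => ?_, by simp [dI]⟩
    simp only [dI, EE, decide_eq_false_iff_not]
    intro he
    have := congrArg Fin.val he
    simp at this
  · rintro ⟨h1, h2⟩
    funext s
    by_cases hs : s.val = 0
    · have hs' : s = 0 := Fin.ext hs
      subst hs'
      simp [dI, h2]
    · have hs2 : s.val - 1 < n := by have := s.isLt; omega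
      have := congrFun h1 ⟨s.val - 1, hs2⟩
      have hc : (⟨s.val - 1, hs2⟩ : Fin n).succ = s := by apply Fin.ext; simp; omega
      rw [hc] at this
      rw [this]
      symm
      simp only [dI, decide_eq_false_iff_not]
      intro he
      have := congrArg Fin.val he
      simp at this
      exact hs (by rw [he]; simp)

lemma prefix_EE_iff {n : ℕ} (J : Idx (n + 1)) :
    J = EE (n + 1) ↔
      ((fun k : Fin n => J k.castSucc) = EE n ∧ J (Fin.last n) = false) := by
  constructor
  · intro hJ; subst hJ; exact ⟨rfl, rfl⟩
  · rintro ⟨h1, h2⟩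
    funext s
    by_cases hs : s.val < n
    · have := congrFun h1 ⟨s.val, hs⟩
      have hc : (⟨s.val, hs⟩ : Fin n).castSucc = s := by apply Fin.ext; simp
      rw [hc] at this
      exact this
    · have hs' : s = Fin.last n := by apply Fin.ext; have := s.isLt; simp [Fin.last]; omega
      subst hs'
      exact h2

lemma suffix_EE_iff {n : ℕ} (J : Idx (n + 1)) :
    J = EE (n + 1) ↔ ((fun k : Fin n => J k.succ) = EE n ∧ J 0 = false) := by
  constructor
  · intro hJ; subst hJ; exact ⟨rfl, rfl⟩
  · rintro ⟨h1, h2⟩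
    funext s
    by_cases hs : s.val = 0
    · have hs' : s = 0 := Fin.ext hs
      subst hs'
      exact h2
    · have hs2 : s.val - 1 < n := by have := s.isLt; omega
      have := congrFun h1 ⟨s.val - 1, hs2⟩
      have hc : (⟨s.val - 1, hs2⟩ : Fin n).succ = s := by apply Fin.ext; simp; omega
      rw [hc] at this
      exact this

lemma main_cocycle (n : ℕ) (i : Bool) : Dmap dd5 (bC (EE n) i) = 0 := by
  funext J i'
  simp only [Dmap, Pi.zero_apply]
  rw [term1_eq, term2_eq, term3_sum]
  have hFl : Fd J (Fin.last n) =
      if (fun k : Fin n => J k.castSucc) = EE n ∧ J (Fin.last n) = true then 1 else 0 := by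
    simp only [Fd, prefix_dI_iff]
  have hF0 : Fd J 0 =
      if (fun k : Fin n => J k.succ) = EE n ∧ J 0 = true then 1 else 0 := by
    simp only [Fd, suffix_dI_iff]
  rw [hFl, hF0]
  by_cases hP : (fun k : Fin n => J k.castSucc) = EE n <;>
    by_cases hS : (fun k : Fin n => J k.succ) = EE n
  · -- both prefixes all-e
    have hiff : J (Fin.last n) = false ↔ J 0 = false := by
      constructor
      · intro hl
        exact ((suffix_EE_iff J).mp ((prefix_EE_iff J).mpr ⟨hP, hl⟩)).2
      · intro h0
        exact ((prefix_EE_iff J).mp ((suffix_EE_iff J).mpr ⟨hS, h0⟩)).2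
    cases hl : J (Fin.last n)
    · have h0 : J 0 = false := hiff.mp hl
      cases i <;> cases i' <;> simp [hP, hS, hl, h0, dd5, delta2, msign, pb]
    · have h0 : J 0 = true := by
        cases h0 : J 0
        · rw [hiff.mpr h0] at hl; exact absurd hl (by simp)
        · rfl
      cases i <;> cases i' <;> simp [hP, hS, hl, h0, dd5, delta2, msign, pb]
  · have hl : J (Fin.last n) = true := by
      cases hl : J (Fin.last n)
      · exact absurd ((suffix_EE_iff J).mp ((prefix_EE_iff J).mpr ⟨hP, hl⟩)).1 hS
      · rfl
    cases i <;> cases i' <;> simp [hP, hS, hl, dd5, delta2, msign, pb]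
  · have h0 : J 0 = true := by
      cases h0 : J 0
      · exact absurd ((prefix_EE_iff J).mp ((suffix_EE_iff J).mpr ⟨hS, h0⟩)).1 hP
      · rfl
    cases i <;> cases i' <;> simp [hP, hS, h0, dd5, delta2, msign, pb]
  · cases i <;> cases i' <;> simp [hP, hS]

/-- For `d₅ = ψ_e^{ef} − ψ_e^{fe} − ψ_f^{ff}`, the cochains `φ_e^{eⁿ}` and `φ_f^{eⁿ}`
are Hochschild cocycles in every degree `n ≥ 0`. -/
theorem d5_basic_cocycles :
    ∀ n : ℕ, Dmap dd5 (phiE n) = 0 ∧ Dmap dd5 (phiF n) = 0 := by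
  intro n
  exact ⟨main_cocycle n false, main_cocycle n true⟩
end
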